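/- arXiv:2106.13853 — 7 statements merged into one kernel-verified Lean document; each statement's English description precedes it below -/
import Mathlib

section
/- Let f : E → ℝ be differentiable, μ-strongly convex and L-smooth on X. Fix y ∈ X, ĝ ∈ E, and α ≥ L. Let z be the unique minimizer over X of x ↦ ⟨ĝ, x − y⟩ + (α/2)‖x − y‖², and let x* be a minimizer of f over X. Then for every γ > 0: (α + μ − γ)‖z − x*‖² + (α − L)‖z − y‖² ≤ (α − μ)‖y − x*‖² + (1/γ)‖∇f(y) − ĝ‖². -/
open scoped RealInnerProductSpace

/-- If `s + t * c ≥ 0` for all small positive `t`, with `c ≥ 0`, then `s ≥ 0`. -/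
lemma aux_limit_nonneg {s c : ℝ} (hc : 0 ≤ c)
    (h : ∀ t : ℝ, 0 < t → t ≤ 1 → 0 ≤ s + t * c) : 0 ≤ s := by
  by_contra hs
  push_neg at hs
  have hc1 : (0:ℝ) < c + 1 := by linarith
  have ht0 : 0 < -s / (c + 1) := div_pos (by linarith) hc1
  set t := min 1 (-s / (c + 1)) with ht
  have h1 : 0 < t := lt_min one_pos ht0
  have h2 : t ≤ 1 := min_le_left _ _
  have h3 : t ≤ -s / (c + 1) := min_le_right _ _
  have h4 : t * (c + 1) ≤ -s := (le_div_iff₀ hc1).mp h3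
  have h5 := h t h1 h2
  linarith

set_option maxHeartbeats 1000000 in
/-- Key inequality (eq. (13) in the paper) for one step of estimated gradient
descent: for any `γ > 0`,
`(α + μ − γ)‖z − x*‖² + (α − L)‖z − y‖² ≤ (α − μ)‖y − x*‖² + (1/γ)‖∇f(y) − ĝ‖²`. -/
theorem stmt_1
    {E : Type*} [NormedAddCommGroup E] [InnerProductSpace ℝ E] [FiniteDimensional ℝ E]
    (X : Set E) (hXne : X.Nonempty) (hXcp : IsCompact X) (hXconv : Convex ℝ X)
    (f : E → ℝ) (hf : Differentiable ℝ f)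
    (μ L : ℝ) (hμ : 0 < μ) (hL : 0 < L)
    (hsc : ∀ a ∈ X, ∀ b ∈ X,
      f a + ⟪gradient f a, b - a⟫ + μ / 2 * ‖b - a‖ ^ 2 ≤ f b)
    (hsm : ∀ a ∈ X, ∀ b ∈ X,
      f b ≤ f a + ⟪gradient f a, b - a⟫ + L / 2 * ‖b - a‖ ^ 2)
    (y : E) (hy : y ∈ X) (ghat : E)
    (α : ℝ) (hα : L ≤ α)
    (z : E) (hzX : z ∈ X)
    (hz : ∀ x ∈ X,
      ⟪ghat, z - y⟫ + α / 2 * ‖z - y‖ ^ 2 ≤ ⟪ghat, x - y⟫ + α / 2 * ‖x - y‖ ^ 2)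
    (xs : E) (hxsX : xs ∈ X) (hxs : ∀ x ∈ X, f xs ≤ f x) :
    ∀ γ : ℝ, 0 < γ →
      (α + μ - γ) * ‖z - xs‖ ^ 2 + (α - L) * ‖z - y‖ ^ 2
        ≤ (α - μ) * ‖y - xs‖ ^ 2 + 1 / γ * ‖gradient f y - ghat‖ ^ 2 := by
  intro γ hγ
  set g := gradient f y with hg
  set a := ‖z - xs‖ ^ 2 with ha
  set b := ‖z - y‖ ^ 2 with hb
  set D := ‖g - ghat‖ ^ 2 with hD
  set c := ‖xs - y‖ ^ 2 with hc
  have hcy : ‖y - xs‖ ^ 2 = c := by rw [hc, norm_sub_rev]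
  -- Optimality of xs: 0 ≤ ⟪∇f(xs), z - xs⟫
  have hopt1 : 0 ≤ ⟪gradient f xs, z - xs⟫ := by
    apply aux_limit_nonneg (c := L / 2 * ‖z - xs‖ ^ 2) (by positivity)
    intro t ht0 ht1
    have hxt : xs + t • (z - xs) ∈ X :=
      hXconv.add_smul_sub_mem hxsX hzX ⟨ht0.le, ht1⟩
    have h1 := hsm xs hxsX _ hxt
    have h2 := hxs _ hxt
    have e1 : xs + t • (z - xs) - xs = t • (z - xs) := by abel
    rw [e1, real_inner_smul_right, norm_smul, mul_pow] at h1
    simp only [Real.norm_eq_abs, sq_abs] at h1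
    nlinarith [sq_nonneg t, ht0]
  -- Optimality of z for the quadratic model: 0 ≤ ⟪ghat, xs - z⟫ + α * ⟪z - y, xs - z⟫
  have hopt2 : 0 ≤ ⟪ghat, xs - z⟫ + α * ⟪z - y, xs - z⟫ := by
    apply aux_limit_nonneg (c := α / 2 * ‖xs - z‖ ^ 2)
      (mul_nonneg (by linarith) (sq_nonneg _))
    intro t ht0 ht1
    have hxt : z + t • (xs - z) ∈ X :=
      hXconv.add_smul_sub_mem hzX hxsX ⟨ht0.le, ht1⟩
    have h1 := hz _ hxt
    have e1 : z + t • (xs - z) - y = (z - y) + t • (xs - z) := by abel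
    rw [e1, norm_add_sq_real, inner_add_right, real_inner_smul_right,
      real_inner_smul_right, norm_smul, mul_pow] at h1
    simp only [Real.norm_eq_abs, sq_abs] at h1
    nlinarith [ht0]
  -- polarization: 2 * ⟪z - y, xs - z⟫ = c - b - a
  have hpol : 2 * ⟪z - y, xs - z⟫ = c - b - a := by
    have e1 : xs - y = (z - y) + (xs - z) := by abel
    have e2 : ‖(z - y) + (xs - z)‖ ^ 2
        = ‖z - y‖ ^ 2 + 2 * ⟪z - y, xs - z⟫ + ‖xs - z‖ ^ 2 := norm_add_sq_real _ _
    have e3 : ‖xs - z‖ = ‖z - xs‖ := norm_sub_rev _ _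
    rw [hc, e1, e2, e3]
    rw [ha, hb]; ring
  -- key inner products
  set p := ⟪g, z - xs⟫ with hp
  set q := ⟪ghat, z - xs⟫ with hq'
  set r := ⟪g - ghat, z - xs⟫ with hr
  have hpqr : p = q + r := by rw [hp, hq', hr, inner_sub_left]; ring
  -- F1 + F2 + F3 : 0 ≤ p + L/2 b - μ/2 c - μ/2 a
  have hsum : 0 ≤ p + L / 2 * b - μ / 2 * c - μ / 2 * a := by
    have F1 := hsm y hy z hzX
    have F2 := hsc y hy xs hxsX
    have F3 := hsc xs hxsX z hzX
    have eid : ⟪g, z - y⟫ - ⟪g, xs - y⟫ = p := by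
      rw [hp, inner_sub_right, inner_sub_right, inner_sub_right]; ring
    have e3 : ‖z - xs‖ ^ 2 = a := rfl
    nlinarith [hopt1]
  -- from hopt2: 2q ≤ α (c - b - a)
  have hqb : 2 * q ≤ α * (c - b - a) := by
    have e : ⟪ghat, xs - z⟫ = -q := by
      rw [hq']
      rw [show xs - z = -(z - xs) by abel, inner_neg_right]
    rw [e] at hopt2
    nlinarith [hpol]
  -- Young: 2γ r ≤ D + γ² a
  have hY : 2 * γ * r ≤ D + γ ^ 2 * a := by
    have h0 : (0:ℝ) ≤ ‖(g - ghat) - γ • (z - xs)‖ ^ 2 := sq_nonneg _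
    rw [norm_sub_sq_real, real_inner_smul_right, norm_smul, mul_pow] at h0
    simp only [Real.norm_eq_abs, sq_abs] at h0
    rw [hD, ha, hr]
    linarith [h0]
  -- combine, multiplied by γ
  rw [hpqr] at hsum
  have h1 : 0 ≤ γ * (q + r + L / 2 * b - μ / 2 * c - μ / 2 * a) :=
    mul_nonneg hγ.le hsum
  have h2 : γ * (2 * q) ≤ γ * (α * (c - b - a)) :=
    mul_le_mul_of_nonneg_left hqb hγ.le
  have main : γ * ((α + μ - γ) * a + (α - L) * b) ≤ γ * ((α - μ) * c) + D := by
    linarith [h1, h2, hY]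
  rw [hcy]
  have hfin : (α + μ - γ) * a + (α - L) * b - (α - μ) * c ≤ D / γ := by
    rw [le_div_iff₀ hγ]
    linarith [main]
  have : 1 / γ * D = D / γ := by ring
  linarith
end

section
/- Let f : E → ℝ be differentiable, μ-strongly convex and L-smooth on X. Fix y ∈ X, ĝ ∈ E, α ≥ L, and γ ∈ (0, 2μ). Let z be the unique minimizer over X of x ↦ ⟨ĝ, x − y⟩ + (α/2)‖x − y‖², and let x* be a minimizer of f over X. If the gradient estimation error satisfies ‖ĝ − ∇f(y)‖² ≤ γ(2μ − γ)‖y − x*‖², then ‖z − x*‖² ≤ ‖y − x*‖². -/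
open scoped RealInnerProductSpace

lemma aux_lim (c K : ℝ) (hK : 0 ≤ K) (h : ∀ t : ℝ, 0 < t → t ≤ 1 → 0 ≤ c + t * K) :
    0 ≤ c := by
  by_contra hc
  push_neg at hc
  rcases hK.eq_or_lt with h0 | h0
  · have := h 1 one_pos le_rfl
    nlinarith
  · have ht0 : (0:ℝ) < min 1 (-c / (2*K)) :=
      lt_min one_pos (div_pos (by linarith) (by linarith))
    have h2 := h _ ht0 (min_le_left _ _)
    have h3 : min 1 (-c/(2*K)) * K ≤ (-c/(2*K)) * K :=
      mul_le_mul_of_nonneg_right (min_le_right _ _) hK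
    have h4 : (-c/(2*K)) * K = -c/2 := by field_simp
    nlinarith

/-- Non-expansion condition: if the gradient estimation error satisfies
`‖ĝ − ∇f(y)‖² ≤ γ(2μ − γ)‖y − x*‖²`, then one step of estimated gradient
descent does not move away from the minimizer: `‖z − x*‖² ≤ ‖y − x*‖²`. -/
theorem stmt_2
    {E : Type*} [NormedAddCommGroup E] [InnerProductSpace ℝ E] [FiniteDimensional ℝ E]
    (X : Set E) (hXne : X.Nonempty) (hXcp : IsCompact X) (hXconv : Convex ℝ X)
    (f : E → ℝ) (hf : Differentiable ℝ f)
    (μ L : ℝ) (hμ : 0 < μ) (hL : 0 < L)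
    (hsc : ∀ a ∈ X, ∀ b ∈ X,
      f a + ⟪gradient f a, b - a⟫ + μ / 2 * ‖b - a‖ ^ 2 ≤ f b)
    (hsm : ∀ a ∈ X, ∀ b ∈ X,
      f b ≤ f a + ⟪gradient f a, b - a⟫ + L / 2 * ‖b - a‖ ^ 2)
    (y : E) (hy : y ∈ X) (ghat : E)
    (α γ : ℝ) (hα : L ≤ α) (hγ0 : 0 < γ) (hγ : γ < 2 * μ)
    (z : E) (hzX : z ∈ X)
    (hz : ∀ x ∈ X,
      ⟪ghat, z - y⟫ + α / 2 * ‖z - y‖ ^ 2 ≤ ⟪ghat, x - y⟫ + α / 2 * ‖x - y‖ ^ 2)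
    (xs : E) (hxsX : xs ∈ X) (hxs : ∀ x ∈ X, f xs ≤ f x)
    (herr : ‖ghat - gradient f y‖ ^ 2 ≤ γ * (2 * μ - γ) * ‖y - xs‖ ^ 2) :
    ‖z - xs‖ ^ 2 ≤ ‖y - xs‖ ^ 2 := by
  rcases le_or_gt μ α with hμα | hμα
  swap
  · -- degenerate case α < μ : then z = xs
    have h1 := hsc z hzX xs hxsX
    have h2 := hsm z hzX xs hxsX
    have h3 : ‖xs - z‖ ^ 2 ≤ 0 := by nlinarith
    have h4 : ‖z - xs‖ ^ 2 ≤ 0 := by rwa [norm_sub_rev] at h3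
    nlinarith [sq_nonneg ‖y - xs‖]
  -- main case μ ≤ α
  have hα0 : 0 < α := lt_of_lt_of_le hμ hμα
  -- variational inequality at z
  have VIz : 0 ≤ ⟪ghat, xs - z⟫ + α * ⟪z - y, xs - z⟫ := by
    apply aux_lim _ (α/2 * ‖xs - z‖^2) (by positivity)
    intro t ht0 ht1
    have hmem : z + t • (xs - z) ∈ X := by
      have := hXconv hzX hxsX (by linarith : (0:ℝ) ≤ 1 - t) (le_of_lt ht0) (by ring)
      convert this using 1
      module
    have hz' := hz _ hmem
    have e1 : ⟪ghat, z + t • (xs - z) - y⟫ = ⟪ghat, z - y⟫ + t * ⟪ghat, xs - z⟫ := by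
      rw [show z + t • (xs - z) - y = (z - y) + t • (xs - z) by abel, inner_add_right,
        real_inner_smul_right]
    have e2 : ‖z + t • (xs - z) - y‖^2
        = ‖z - y‖^2 + 2*t*⟪z - y, xs - z⟫ + t^2*‖xs - z‖^2 := by
      rw [show z + t • (xs - z) - y = (z - y) + t • (xs - z) by abel, norm_add_sq_real,
        real_inner_smul_right, norm_smul, Real.norm_eq_abs, mul_pow, sq_abs]
      ring
    rw [e1, e2] at hz'
    have h' : t * 0 ≤ t * (⟪ghat, xs - z⟫ + α * ⟪z - y, xs - z⟫ + t * (α/2 * ‖xs - z‖^2)) := by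
      nlinarith
    exact le_of_mul_le_mul_left h' ht0
  -- variational inequality at xs
  have VIxs : 0 ≤ ⟪gradient f xs, z - xs⟫ := by
    apply aux_lim _ (L/2 * ‖z - xs‖^2) (by positivity)
    intro t ht0 ht1
    have hmem : xs + t • (z - xs) ∈ X := by
      have := hXconv hxsX hzX (by linarith : (0:ℝ) ≤ 1 - t) (le_of_lt ht0) (by ring)
      convert this using 1
      module
    have h1 := hsm xs hxsX _ hmem
    have h2 := hxs _ hmem
    have e1 : ⟪gradient f xs, xs + t • (z - xs) - xs⟫ = t * ⟪gradient f xs, z - xs⟫ := by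
      rw [show xs + t • (z - xs) - xs = t • (z - xs) by abel, real_inner_smul_right]
    have e2 : ‖xs + t • (z - xs) - xs‖^2 = t^2 * ‖z - xs‖^2 := by
      rw [show xs + t • (z - xs) - xs = t • (z - xs) by abel, norm_smul, Real.norm_eq_abs,
        mul_pow, sq_abs]
    rw [e1, e2] at h1
    have h' : t * 0 ≤ t * (⟪gradient f xs, z - xs⟫ + t * (L/2 * ‖z - xs‖^2)) := by
      nlinarith
    exact le_of_mul_le_mul_left h' ht0
  -- basic inequalities
  have key2 := hsc y hy xs hxsX
  have key3 := hsm y hy z hzX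
  have key4 := hsc xs hxsX z hzX
  have hnrm1 : ‖xs - y‖^2 = ‖y - xs‖^2 := by rw [norm_sub_rev]
  have hnrm2 : ‖xs - z‖^2 = ‖z - xs‖^2 := by rw [norm_sub_rev]
  rw [hnrm1] at key2
  have H4 : 2*⟪z - y, xs - z⟫ = ‖y - xs‖^2 - ‖z - y‖^2 - ‖z - xs‖^2 := by
    rw [← hnrm1, ← hnrm2, show xs - y = (z - y) + (xs - z) by abel, norm_add_sq_real]
    ring
  have H5 : ⟪ghat, xs - z⟫
      = ⟪gradient f y, xs - y⟫ - ⟪gradient f y, z - y⟫ + ⟪ghat - gradient f y, xs - z⟫ := by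
    have e1 : ⟪gradient f y, xs - z⟫ = ⟪gradient f y, xs - y⟫ - ⟪gradient f y, z - y⟫ := by
      rw [show xs - z = (xs - y) - (z - y) by abel, inner_sub_right]
    have e2 : ⟪ghat - gradient f y, xs - z⟫ = ⟪ghat, xs - z⟫ - ⟪gradient f y, xs - z⟫ :=
      inner_sub_left _ _ _
    linarith
  have H6 : ⟪ghat - gradient f y, xs - z⟫ ≤ ‖ghat - gradient f y‖ * ‖xs - z‖ :=
    real_inner_le_norm _ _
  -- Young's inequality with the error bound
  have hPe : ⟪ghat - gradient f y, xs - z⟫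
      ≤ (2*μ - γ)/2 * ‖y - xs‖^2 + γ/2 * ‖xs - z‖^2 := by
    have h1 : (2*γ) * ⟪ghat - gradient f y, xs - z⟫
        ≤ (2*γ) * ((2*μ - γ)/2 * ‖y - xs‖^2 + γ/2 * ‖xs - z‖^2) := by
      nlinarith [mul_le_mul_of_nonneg_left H6 (by linarith : (0:ℝ) ≤ 2*γ),
        sq_nonneg (‖ghat - gradient f y‖ - γ * ‖xs - z‖), herr]
    exact le_of_mul_le_mul_left h1 (by linarith)
  rw [hnrm2] at hPe
  -- bound on ⟪ghat, xs - z⟫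
  have hP : ⟪ghat, xs - z⟫ ≤ -(μ/2)*‖z - xs‖^2 - μ/2*‖y - xs‖^2 + L/2*‖z - y‖^2
      + ((2*μ - γ)/2 * ‖y - xs‖^2 + γ/2 * ‖z - xs‖^2) := by
    have hf1 : f xs ≤ f z := hxs z hzX
    linarith [key2, key3, key4, VIxs, hPe, H5, hxs z hzX]
  -- conclusion
  have hpos : 0 < α + μ - γ := by linarith
  have H4' : α * (2*⟪z - y, xs - z⟫) = α * (‖y - xs‖^2 - ‖z - y‖^2 - ‖z - xs‖^2) := by
    rw [H4]
  have hLs : 0 ≤ (α - L) * ‖z - y‖^2 := mul_nonneg (by linarith) (sq_nonneg _)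
  have hfin : (α + μ - γ) * ‖z - xs‖^2 ≤ (α + μ - γ) * ‖y - xs‖^2 := by
    linarith [VIz, hP, H4', hLs]
  exact le_of_mul_le_mul_left hfin hpos
end

section
/- Let f : E → ℝ be differentiable, μ-strongly convex and L-smooth on X. Fix y ∈ X, ĝ ∈ E, α ≥ L, and γ ∈ (0, 2μ). Let z be the unique minimizer over X of x ↦ ⟨ĝ, x − y⟩ + (α/2)‖x − y‖², and let x* be a minimizer of f over X. Then ‖z − x*‖ ≤ √η · ‖y − x*‖ + √β · ‖ĝ − ∇f(y)‖, where η = (α − μ)/(α + μ − γ) and β = 1/(γ(α + μ − γ)). -/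
open scoped RealInnerProductSpace

/-- If `-(t*c) ≤ a` for all `t ∈ (0,1]` with `c ≥ 0`, then `0 ≤ a`. -/
lemma aux_limit (a c : ℝ) (hc : 0 ≤ c) (h : ∀ t : ℝ, 0 < t → t ≤ 1 → -(t * c) ≤ a) :
    0 ≤ a := by
  by_contra hlt
  push_neg at hlt
  rcases eq_or_lt_of_le hc with hc0 | hc0
  · have := h 1 one_pos le_rfl
    rw [← hc0] at this
    linarith
  · set t : ℝ := min 1 (-a / (2 * c)) with ht
    have ht0 : 0 < t := lt_min one_pos (div_pos (by linarith) (by linarith))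
    have ht1 : t ≤ 1 := min_le_left _ _
    have htc : t * c ≤ -a / 2 := by
      have h2 : t ≤ -a / (2 * c) := min_le_right _ _
      calc t * c ≤ (-a / (2 * c)) * c := mul_le_mul_of_nonneg_right h2 hc
        _ = -a / 2 := by field_simp
    have := h t ht0 ht1
    linarith

/-- `√(a+b) ≤ √a + √b`. -/
lemma aux_sqrt_add (a b : ℝ) (ha : 0 ≤ a) (hb : 0 ≤ b) :
    Real.sqrt (a + b) ≤ Real.sqrt a + Real.sqrt b := by
  have h1 : a + b ≤ (Real.sqrt a + Real.sqrt b) ^ 2 := by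
    have hsa : Real.sqrt a ^ 2 = a := Real.sq_sqrt ha
    have hsb : Real.sqrt b ^ 2 = b := Real.sq_sqrt hb
    nlinarith [Real.sqrt_nonneg a, Real.sqrt_nonneg b]
  calc Real.sqrt (a + b) ≤ Real.sqrt ((Real.sqrt a + Real.sqrt b) ^ 2) :=
        Real.sqrt_le_sqrt h1
    _ = Real.sqrt a + Real.sqrt b := by
        rw [Real.sqrt_sq (by positivity)]

set_option maxHeartbeats 1000000 in
/-- Square-root form of the one-step estimated gradient descent contraction:
`‖z − x*‖ ≤ √η ‖y − x*‖ + √β ‖ĝ − ∇f(y)‖` with `η = (α − μ)/(α + μ − γ)` and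
`β = 1/(γ(α + μ − γ))`. -/
theorem stmt_3
    {E : Type*} [NormedAddCommGroup E] [InnerProductSpace ℝ E] [FiniteDimensional ℝ E]
    (X : Set E) (hXne : X.Nonempty) (hXcp : IsCompact X) (hXconv : Convex ℝ X)
    (f : E → ℝ) (hf : Differentiable ℝ f)
    (μ L : ℝ) (hμ : 0 < μ) (hL : 0 < L)
    (hsc : ∀ a ∈ X, ∀ b ∈ X,
      f a + ⟪gradient f a, b - a⟫ + μ / 2 * ‖b - a‖ ^ 2 ≤ f b)
    (hsm : ∀ a ∈ X, ∀ b ∈ X,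
      f b ≤ f a + ⟪gradient f a, b - a⟫ + L / 2 * ‖b - a‖ ^ 2)
    (y : E) (hy : y ∈ X) (ghat : E)
    (α γ : ℝ) (hα : L ≤ α) (hγ0 : 0 < γ) (hγ : γ < 2 * μ)
    (z : E) (hzX : z ∈ X)
    (hz : ∀ x ∈ X,
      ⟪ghat, z - y⟫ + α / 2 * ‖z - y‖ ^ 2 ≤ ⟪ghat, x - y⟫ + α / 2 * ‖x - y‖ ^ 2)
    (xs : E) (hxsX : xs ∈ X) (hxs : ∀ x ∈ X, f xs ≤ f x) :
    ‖z - xs‖ ≤ Real.sqrt ((α - μ) / (α + μ - γ)) * ‖y - xs‖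
      + Real.sqrt (1 / (γ * (α + μ - γ))) * ‖ghat - gradient f y‖ := by
  by_cases hzxs : z = xs
  · rw [hzxs, sub_self, norm_zero]
    positivity
  -- nontrivial case
  have hα0 : (0:ℝ) < α := lt_of_lt_of_le hL hα
  set g : E := gradient f y with hg
  set e : E := ghat - g with he
  set d : E := xs - z with hd
  have hdne : d ≠ 0 := sub_ne_zero.mpr (fun h => hzxs h.symm)
  have hdpos : (0:ℝ) < ‖d‖ ^ 2 := by
    have : (0:ℝ) < ‖d‖ := norm_pos_iff.mpr hdne
    positivity
  -- μ ≤ L, since z ≠ xs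
  have hμL : μ ≤ L := by
    have h1 := hsc z hzX xs hxsX
    have h2 := hsm z hzX xs hxsX
    rw [← hd] at h1 h2
    nlinarith [hdpos]
  have hs : 0 < α + μ - γ := by linarith
  have hαμ : 0 ≤ α - μ := by linarith
  -- variational inequality at z
  have hVIz : 0 ≤ ⟪ghat, d⟫ + α * ⟪z - y, d⟫ := by
    apply aux_limit _ (α / 2 * ‖d‖ ^ 2) (by positivity)
    intro t ht0 ht1
    have hw : z + t • d ∈ X := by
      have := hXconv hzX hxsX (a := 1 - t) (b := t) (by linarith) (by linarith)
        (by ring)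
      convert this using 1
      rw [hd]
      module
    have hzw := hz _ hw
    have hexp : z + t • d - y = (z - y) + t • d := by abel
    rw [hexp, inner_add_right, real_inner_smul_right, norm_add_sq_real,
      real_inner_smul_right, norm_smul, Real.norm_eq_abs] at hzw
    have habs : (|t| * ‖d‖) ^ 2 = t ^ 2 * ‖d‖ ^ 2 := by
      rw [mul_pow, sq_abs]
    rw [habs] at hzw
    nlinarith
  -- variational inequality at xs, in direction z - xs = -d
  have hVIxs : 0 ≤ ⟪gradient f xs, z - xs⟫ := by
    apply aux_limit _ (L / 2 * ‖z - xs‖ ^ 2) (by positivity)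
    intro t ht0 ht1
    have hw : xs + t • (z - xs) ∈ X := by
      have := hXconv hxsX hzX (a := 1 - t) (b := t) (by linarith) (by linarith)
        (by ring)
      convert this using 1
      module
    have h1 := hsm xs hxsX _ hw
    have h2 := hxs _ hw
    have hexp : xs + t • (z - xs) - xs = t • (z - xs) := by abel
    rw [hexp, real_inner_smul_right, norm_smul, Real.norm_eq_abs] at h1
    have habs : (|t| * ‖z - xs‖) ^ 2 = t ^ 2 * ‖z - xs‖ ^ 2 := by
      rw [mul_pow, sq_abs]
    rw [habs] at h1
    nlinarith
  -- scalar abbreviations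
  have hdecomp : xs - y = d + (z - y) := by rw [hd]; abel
  have hinner1 : ⟪g, xs - y⟫ = ⟪g, d⟫ + ⟪g, z - y⟫ := by
    rw [hdecomp, inner_add_right]
  have hnorm1 : ‖xs - y‖ ^ 2 = ‖d‖ ^ 2 + 2 * ⟪d, z - y⟫ + ‖z - y‖ ^ 2 := by
    rw [hdecomp, norm_add_sq_real]
  have hinner2 : ⟪ghat, d⟫ = ⟪g, d⟫ + ⟪e, d⟫ := by
    rw [he, inner_sub_left]; ring
  have hinner3 : ⟪z - y, d⟫ = ⟪d, z - y⟫ := real_inner_comm _ _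
  have hCS : ⟪e, d⟫ ≤ ‖e‖ * ‖d‖ := real_inner_le_norm _ _
  -- f-based inequalities
  have hf1 := hsc y hy xs hxsX    -- f y + ⟪g, xs - y⟫ + μ/2 ‖xs-y‖² ≤ f xs
  have hf2 := hsm y hy z hzX      -- f z ≤ f y + ⟪g, z - y⟫ + L/2 ‖z-y‖²
  have hf3 := hsc xs hxsX z hzX   -- f xs + ⟪∇f xs, z-xs⟫ + μ/2 ‖z-xs‖² ≤ f z
  rw [← hg] at hf1 hf2
  -- norms equalities
  have hnzx : ‖z - xs‖ = ‖d‖ := by rw [hd, norm_sub_rev]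
  have hnyx : ‖y - xs‖ = ‖xs - y‖ := norm_sub_rev _ _
  rw [hnzx] at hf3
  -- Young's inequality
  have hyoung : ‖e‖ * ‖d‖ ≤ ‖e‖ ^ 2 / (2 * γ) + γ / 2 * ‖d‖ ^ 2 := by
    have h := sq_nonneg (‖e‖ - γ * ‖d‖)
    have h2 : 2 * γ * (‖e‖ * ‖d‖) ≤ ‖e‖ ^ 2 + γ ^ 2 * ‖d‖ ^ 2 := by nlinarith
    rw [← sub_nonneg]
    have h3 := div_nonneg (by linarith : (0:ℝ) ≤ ‖e‖ ^ 2 + γ ^ 2 * ‖d‖ ^ 2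
      - 2 * γ * (‖e‖ * ‖d‖)) (by linarith : (0:ℝ) ≤ 2 * γ)
    calc (0:ℝ) ≤ (‖e‖ ^ 2 + γ ^ 2 * ‖d‖ ^ 2 - 2 * γ * (‖e‖ * ‖d‖)) / (2 * γ) := h3
      _ = ‖e‖ ^ 2 / (2 * γ) + γ / 2 * ‖d‖ ^ 2 - ‖e‖ * ‖d‖ := by
          field_simp
  -- key linear steps
  have hstar : ⟪g, d⟫ + μ / 2 * ‖xs - y‖ ^ 2 + μ / 2 * ‖d‖ ^ 2 ≤ L / 2 * ‖z - y‖ ^ 2 := by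
    linarith [hf1, hf2, hf3, hVIxs, hinner1]
  have hR : α * ⟪z - y, d⟫
      = α / 2 * ‖xs - y‖ ^ 2 - α / 2 * ‖d‖ ^ 2 - α / 2 * ‖z - y‖ ^ 2 := by
    rw [hinner3]; linear_combination (-(α / 2)) * hnorm1
  have hVIz2 : 0 ≤ ⟪g, d⟫ + ⟪e, d⟫
      + (α / 2 * ‖xs - y‖ ^ 2 - α / 2 * ‖d‖ ^ 2 - α / 2 * ‖z - y‖ ^ 2) := by
    linarith [hVIz, hinner2, hR]
  have hC : (0:ℝ) ≤ ‖z - y‖ ^ 2 := by positivity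
  have hLC : L / 2 * ‖z - y‖ ^ 2 ≤ α / 2 * ‖z - y‖ ^ 2 :=
    mul_le_mul_of_nonneg_right (by linarith) hC
  have hmain : (α + μ - γ) * ‖d‖ ^ 2 ≤ (α - μ) * ‖xs - y‖ ^ 2 + ‖e‖ ^ 2 / γ := by
    have : ‖e‖ ^ 2 / (2 * γ) * 2 = ‖e‖ ^ 2 / γ := by
      field_simp
    linarith [hstar, hVIz2, hCS, hyoung, hLC, this]
  have hAineq : ‖d‖ ^ 2 ≤ (α - μ) / (α + μ - γ) * ‖xs - y‖ ^ 2
      + 1 / (γ * (α + μ - γ)) * ‖e‖ ^ 2 := by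
    have key : (α - μ) / (α + μ - γ) * ‖xs - y‖ ^ 2 + 1 / (γ * (α + μ - γ)) * ‖e‖ ^ 2
        = ((α - μ) * ‖xs - y‖ ^ 2 + ‖e‖ ^ 2 / γ) / (α + μ - γ) := by
      field_simp
    rw [key, le_div_iff₀ hs]
    linarith [hmain]
  -- square roots
  have hη : 0 ≤ (α - μ) / (α + μ - γ) := by positivity
  have hβ : 0 ≤ 1 / (γ * (α + μ - γ)) := by positivity
  calc ‖z - xs‖ = Real.sqrt (‖d‖ ^ 2) := by
        rw [Real.sqrt_sq (norm_nonneg _), hnzx]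
    _ ≤ Real.sqrt ((α - μ) / (α + μ - γ) * ‖xs - y‖ ^ 2
          + 1 / (γ * (α + μ - γ)) * ‖e‖ ^ 2) := Real.sqrt_le_sqrt hAineq
    _ ≤ Real.sqrt ((α - μ) / (α + μ - γ) * ‖xs - y‖ ^ 2)
          + Real.sqrt (1 / (γ * (α + μ - γ)) * ‖e‖ ^ 2) :=
        aux_sqrt_add _ _ (by positivity) (by positivity)
    _ = Real.sqrt ((α - μ) / (α + μ - γ)) * ‖y - xs‖
          + Real.sqrt (1 / (γ * (α + μ - γ))) * ‖ghat - gradient f y‖ := by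
        rw [Real.sqrt_mul hη, Real.sqrt_mul hβ, Real.sqrt_sq (norm_nonneg _),
          Real.sqrt_sq (norm_nonneg _), hnyx, he, hg]
end

section
/- Let f : E → ℝ be differentiable, μ-strongly convex and L-smooth on X, with minimizer x* over X. Fix α ≥ L, γ ∈ (0, 2μ), δ ≥ 0, and an integer J ≥ 1; set η = (α − μ)/(α + μ − γ) and β = 1/(γ(α + μ − γ)). Let w₀ ∈ X and, for j = 1, …, J, let wⱼ = Proj_X(w_{j−1} − (1/α)gⱼ) for some gⱼ ∈ E satisfying ‖gⱼ − ∇f(w_{j−1})‖ ≤ δ. Then ‖w_J − x*‖ ≤ η^{J/2} ‖w₀ − x*‖ + ((1 − η^{J/2})/(1 − √η)) √β δ. -/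
open scoped RealInnerProductSpace

private lemma aux_small (c K : ℝ) (h : ∀ t : ℝ, 0 < t → t ≤ 1 → c ≤ t * K) : c ≤ 0 := by
  by_contra hc
  push_neg at hc
  rcases le_or_gt K 0 with hK | hK
  · have h1 := h 1 one_pos le_rfl
    linarith
  · have ht : (0:ℝ) < c / (2 * K) := by positivity
    have h1 := h (min 1 (c / (2 * K))) (lt_min one_pos ht) (min_le_left _ _)
    have h2 : min 1 (c / (2 * K)) * K ≤ (c / (2 * K)) * K :=
      mul_le_mul_of_nonneg_right (min_le_right _ _) hK.le
    have h3 : (c / (2 * K)) * K = c / 2 := by field_simp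
    linarith

private lemma proj_vi {E : Type*} [NormedAddCommGroup E] [InnerProductSpace ℝ E]
    {X : Set E} (hXconv : Convex ℝ X) {p q : E} (hq : q ∈ X)
    (hmin : ∀ v ∈ X, ‖p - q‖ ≤ ‖p - v‖) {v : E} (hv : v ∈ X) :
    ⟪p - q, v - q⟫ ≤ 0 := by
  have h2 : (2:ℝ) * ⟪p - q, v - q⟫ ≤ 0 := by
    apply aux_small _ (‖v - q‖ ^ 2)
    intro t ht0 ht1
    have hmem : q + t • (v - q) ∈ X := by
      have hcc := hXconv hq hv (by linarith : (0:ℝ) ≤ 1 - t) ht0.le (by ring)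
      have : q + t • (v - q) = (1 - t) • q + t • v := by module
      rw [this]; exact hcc
    have hle := hmin _ hmem
    have hsq : ‖p - q‖ ^ 2 ≤ ‖p - (q + t • (v - q))‖ ^ 2 :=
      pow_le_pow_left₀ (norm_nonneg _) hle 2
    have hrw : p - (q + t • (v - q)) = (p - q) - t • (v - q) := by abel
    have hex : ‖(p - q) - t • (v - q)‖ ^ 2
        = ‖p - q‖ ^ 2 - 2 * (t * ⟪p - q, v - q⟫) + t ^ 2 * ‖v - q‖ ^ 2 := by
      rw [norm_sub_sq_real, real_inner_smul_right, norm_smul, Real.norm_eq_abs,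
        abs_of_pos ht0, mul_pow]
    rw [hrw, hex] at hsq
    have h3 : t * (2 * ⟪p - q, v - q⟫) ≤ t * (t * ‖v - q‖ ^ 2) := by nlinarith [hsq]
    exact le_of_mul_le_mul_left h3 ht0
  linarith

set_option maxHeartbeats 1600000 in
/-- Square-root form of the multi-step inexact projected gradient descent bound:
`‖w_J − x*‖ ≤ (√η)^J ‖w₀ − x*‖ + ((1 − (√η)^J)/(1 − √η)) √β δ`, where
`η = (α − μ)/(α + μ - γ)` and `β = 1/(γ(α + μ − γ))`. -/
theorem stmt_6
    {E : Type*} [NormedAddCommGroup E] [InnerProductSpace ℝ E] [FiniteDimensional ℝ E]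
    (X : Set E) (hXne : X.Nonempty) (hXcp : IsCompact X) (hXconv : Convex ℝ X)
    (f : E → ℝ) (hf : Differentiable ℝ f)
    (μ L : ℝ) (hμ : 0 < μ) (hL : 0 < L)
    (hsc : ∀ a ∈ X, ∀ b ∈ X,
      f a + ⟪gradient f a, b - a⟫ + μ / 2 * ‖b - a‖ ^ 2 ≤ f b)
    (hsm : ∀ a ∈ X, ∀ b ∈ X,
      f b ≤ f a + ⟪gradient f a, b - a⟫ + L / 2 * ‖b - a‖ ^ 2)
    (xs : E) (hxsX : xs ∈ X) (hxs : ∀ x ∈ X, f xs ≤ f x)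
    (α γ δ : ℝ) (hα : L ≤ α) (hγ0 : 0 < γ) (hγ : γ < 2 * μ) (hδ : 0 ≤ δ)
    (J : ℕ) (hJ : 1 ≤ J)
    (w : ℕ → E) (hw0 : w 0 ∈ X)
    (hstep : ∀ j, 1 ≤ j → j ≤ J → ∃ g : E,
      ‖g - gradient f (w (j - 1))‖ ≤ δ ∧ w j ∈ X ∧
      ∀ v ∈ X, ‖(w (j - 1) - (1 / α) • g) - w j‖ ≤ ‖(w (j - 1) - (1 / α) • g) - v‖) :
    ‖w J - xs‖ ≤ Real.sqrt ((α - μ) / (α + μ - γ)) ^ J * ‖w 0 - xs‖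
      + (1 - Real.sqrt ((α - μ) / (α + μ - γ)) ^ J)
          / (1 - Real.sqrt ((α - μ) / (α + μ - γ)))
        * Real.sqrt (1 / (γ * (α + μ - γ))) * δ := by
  have hα0 : 0 < α := lt_of_lt_of_le hL hα
  set η : ℝ := (α - μ) / (α + μ - γ) with hηdef
  set β : ℝ := 1 / (γ * (α + μ - γ)) with hβdef
  set s : ℝ := Real.sqrt η with hsdef
  have hs0 : 0 ≤ s := Real.sqrt_nonneg _
  have hmemX : ∀ j, j ≤ J → w j ∈ X := by
    intro j hj
    rcases Nat.eq_zero_or_pos j with h0 | h1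
    · rw [h0]; exact hw0
    · obtain ⟨g, _, hX, _⟩ := hstep j h1 hj; exact hX
  by_cases hcase : μ ≤ α
  · -- main case
    have hd : 0 < α + μ - γ := by linarith
    have hη0 : 0 ≤ η := div_nonneg (by linarith) hd.le
    have hη1 : η < 1 := (div_lt_one hd).mpr (by linarith)
    have hβ0 : 0 < β := by
      rw [hβdef]; exact one_div_pos.mpr (mul_pos hγ0 hd)
    have hs1 : s < 1 := by
      rw [hsdef]
      have := Real.sqrt_lt_sqrt hη0 hη1
      simpa using this
    -- first-order optimality at xs
    have hopt : ∀ v ∈ X, 0 ≤ ⟪gradient f xs, v - xs⟫ := by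
      intro v hv
      have key : -(⟪gradient f xs, v - xs⟫) ≤ 0 := by
        apply aux_small _ (L / 2 * ‖v - xs‖ ^ 2)
        intro t ht0 ht1
        have hmem : xs + t • (v - xs) ∈ X := by
          have hcc := hXconv hxsX hv (by linarith : (0:ℝ) ≤ 1 - t) ht0.le (by ring)
          have : xs + t • (v - xs) = (1 - t) • xs + t • v := by module
          rw [this]; exact hcc
        have h1 := hsm xs hxsX _ hmem
        have h2 := hxs _ hmem
        rw [add_sub_cancel_left, real_inner_smul_right, norm_smul, Real.norm_eq_abs,
          abs_of_pos ht0, mul_pow] at h1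
        have h3 : t * 0 ≤ t * (⟪gradient f xs, v - xs⟫ + t * (L / 2 * ‖v - xs‖ ^ 2)) := by
          nlinarith [h1, h2]
        have h4 := le_of_mul_le_mul_left h3 ht0
        linarith
      linarith
    -- one-step contraction
    have step : ∀ j, 1 ≤ j → j ≤ J →
        ‖w j - xs‖ ≤ s * ‖w (j - 1) - xs‖ + Real.sqrt β * δ := by
      intro j hj1 hjJ
      obtain ⟨g, hg, hyX, hproj⟩ := hstep j hj1 hjJ
      have hxX : w (j - 1) ∈ X := hmemX _ (le_trans (Nat.sub_le j 1) hjJ)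
      set x := w (j - 1) with hxdef
      set y := w j with hydef
      set h := gradient f x with hh
      set A := ‖x - xs‖ with hAdef
      set B := ‖y - xs‖ with hBdef
      set C := ‖y - x‖ with hCdef
      have hA0 : 0 ≤ A := norm_nonneg _
      have hB0 : 0 ≤ B := norm_nonneg _
      have F1 : f y ≤ f x + ⟪h, y - x⟫ + α / 2 * C ^ 2 := by
        have := hsm x hxX y hyX
        nlinarith [this, sq_nonneg C]
      have F2 : f x + ⟪h, xs - x⟫ + μ / 2 * A ^ 2 ≤ f xs := by
        have := hsc x hxX xs hxsX
        rwa [norm_sub_rev xs x] at this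
      have F3 : f xs + μ / 2 * B ^ 2 ≤ f y := by
        have h1 := hsc xs hxsX y hyX
        have h2 := hopt y hyX
        linarith
      have F4 : ⟪g, y - xs⟫ ≤ α * ⟪x - y, y - xs⟫ := by
        have hvi : ⟪(x - (1 / α) • g) - y, xs - y⟫ ≤ 0 := proj_vi hXconv hyX hproj hxsX
        have hexp : ⟪(x - (1 / α) • g) - y, xs - y⟫
            = -⟪x - y, y - xs⟫ + (1 / α) * ⟪g, y - xs⟫ := by
          have e1 : (x - (1 / α) • g) - y = (x - y) - (1 / α) • g := by abel
          have e2 : xs - y = -(y - xs) := by abel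
          rw [e1, e2, inner_neg_right, inner_sub_left, real_inner_smul_left]
          ring
        rw [hexp] at hvi
        have h' : (1 / α) * ⟪g, y - xs⟫ ≤ ⟪x - y, y - xs⟫ := by linarith
        calc ⟪g, y - xs⟫ = α * ((1 / α) * ⟪g, y - xs⟫) := by field_simp
          _ ≤ α * ⟪x - y, y - xs⟫ := mul_le_mul_of_nonneg_left h' hα0.le
      have F5 : 2 * ⟪x - y, y - xs⟫ = A ^ 2 - C ^ 2 - B ^ 2 := by
        have hid := norm_add_sq_real (x - y) (y - xs)
        have e1 : x - y + (y - xs) = x - xs := by abel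
        have e2 : ‖x - y‖ = C := norm_sub_rev x y
        rw [e1, e2] at hid
        linarith
      have G : α * ⟪x - y, y - xs⟫ = α / 2 * A ^ 2 - α / 2 * C ^ 2 - α / 2 * B ^ 2 := by
        linear_combination (α / 2) * F5
      have F6 : -(δ * B) ≤ ⟪g - h, y - xs⟫ := by
        have habs := abs_real_inner_le_norm (g - h) (y - xs)
        have hmul : ‖g - h‖ * ‖y - xs‖ ≤ δ * B :=
          mul_le_mul_of_nonneg_right hg hB0
        have := neg_abs_le (⟪g - h, y - xs⟫)
        linarith
      have F7 : ⟪h, y - xs⟫ = ⟪g, y - xs⟫ - ⟪g - h, y - xs⟫ := by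
        rw [inner_sub_left]; ring
      have F8 : ⟪h, y - x⟫ = ⟪h, y - xs⟫ + ⟪h, xs - x⟫ := by
        rw [← inner_add_right]
        congr 1
        abel
      have Young : δ * B ≤ γ / 2 * B ^ 2 + δ ^ 2 / (2 * γ) := by
        rw [← sub_nonneg]
        have heq : γ / 2 * B ^ 2 + δ ^ 2 / (2 * γ) - δ * B = (γ * B - δ) ^ 2 / (2 * γ) := by
          field_simp
          ring
        rw [heq]
        positivity
      have hdd : δ ^ 2 / γ = 2 * (δ ^ 2 / (2 * γ)) := by
        field_simp
      have key : (α + μ - γ) * B ^ 2 ≤ (α - μ) * A ^ 2 + δ ^ 2 / γ := by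
        linarith [F1, F2, F3, F4, G, F6, F7, F8, Young, hdd]
      have hBsq : B ^ 2 ≤ η * A ^ 2 + β * δ ^ 2 := by
        have h1 : B ^ 2 ≤ ((α - μ) * A ^ 2 + δ ^ 2 / γ) / (α + μ - γ) := by
          rw [le_div_iff₀ hd]
          linarith
        have heq : ((α - μ) * A ^ 2 + δ ^ 2 / γ) / (α + μ - γ) = η * A ^ 2 + β * δ ^ 2 := by
          rw [hηdef, hβdef]
          field_simp
        rwa [heq] at h1
      have hrhs0 : 0 ≤ s * A + Real.sqrt β * δ := by positivity
      have h2 : B ^ 2 ≤ (s * A + Real.sqrt β * δ) ^ 2 := by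
        have e1 : s ^ 2 = η := Real.sq_sqrt hη0
        have e2 : Real.sqrt β ^ 2 = β := Real.sq_sqrt hβ0.le
        nlinarith [hBsq, mul_nonneg (mul_nonneg hs0 hA0)
          (mul_nonneg (Real.sqrt_nonneg β) hδ)]
      calc B = Real.sqrt (B ^ 2) := (Real.sqrt_sq hB0).symm
        _ ≤ Real.sqrt ((s * A + Real.sqrt β * δ) ^ 2) := Real.sqrt_le_sqrt h2
        _ = s * A + Real.sqrt β * δ := Real.sqrt_sq hrhs0
    -- induction
    have ind : ∀ j, j ≤ J → ‖w j - xs‖ ≤ s ^ j * ‖w 0 - xs‖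
        + (∑ i ∈ Finset.range j, s ^ i) * (Real.sqrt β * δ) := by
      intro j
      induction j with
      | zero => intro _; simp
      | succ n ih =>
        intro hn1
        have hn : n ≤ J := le_trans (Nat.le_succ n) hn1
        have hs' := step (n + 1) (Nat.succ_le_succ (Nat.zero_le n)) hn1
        simp only [Nat.add_sub_cancel] at hs'
        have hih := ih hn
        have hmono : s * ‖w n - xs‖ ≤ s * (s ^ n * ‖w 0 - xs‖
            + (∑ i ∈ Finset.range n, s ^ i) * (Real.sqrt β * δ)) :=
          mul_le_mul_of_nonneg_left hih hs0
        rw [geom_sum_succ]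
        calc ‖w (n + 1) - xs‖ ≤ s * ‖w n - xs‖ + Real.sqrt β * δ := hs'
          _ ≤ s * (s ^ n * ‖w 0 - xs‖
              + (∑ i ∈ Finset.range n, s ^ i) * (Real.sqrt β * δ)) + Real.sqrt β * δ := by
            linarith
          _ = s ^ (n + 1) * ‖w 0 - xs‖
              + (s * ∑ i ∈ Finset.range n, s ^ i + 1) * (Real.sqrt β * δ) := by ring
    have hfin := ind J le_rfl
    have hsum : (∑ i ∈ Finset.range J, s ^ i) = (1 - s ^ J) / (1 - s) := by
      rw [geom_sum_eq hs1.ne]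
      rw [← neg_div_neg_eq]
      congr 1 <;> ring
    rw [hsum] at hfin
    calc ‖w J - xs‖ ≤ s ^ J * ‖w 0 - xs‖ + (1 - s ^ J) / (1 - s) * (Real.sqrt β * δ) := hfin
      _ = s ^ J * ‖w 0 - xs‖ + (1 - s ^ J) / (1 - s) * Real.sqrt β * δ := by ring
  · -- degenerate case: α < μ, so X is a singleton
    push_neg at hcase
    have hsing : ∀ a ∈ X, ∀ b ∈ X, a = b := by
      intro a ha b hb
      have h1 := hsc a ha b hb
      have h2 := hsm a ha b hb
      have hLμ : L < μ := lt_of_le_of_lt hα hcase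
      have hsq : ‖b - a‖ ^ 2 ≤ 0 := by nlinarith [h1, h2]
      have : ‖b - a‖ = 0 := by nlinarith [norm_nonneg (b - a), sq_nonneg ‖b - a‖]
      exact (norm_sub_eq_zero_iff.mp this).symm
    have e1 : w J = xs := hsing _ (hmemX J le_rfl) xs hxsX
    have e0 : w 0 = xs := hsing _ hw0 xs hxsX
    rw [e1, e0, sub_self, norm_zero, mul_zero, zero_add]
    have hq : 0 ≤ (1 - s ^ J) / (1 - s) := by
      rcases lt_trichotomy s 1 with h | h | h
      · apply div_nonneg
        · have := pow_le_one₀ (n := J) hs0 h.le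
          linarith
        · linarith
      · rw [h]; simp
      · rw [div_nonneg_iff]
        right
        constructor
        · have := one_le_pow₀ (n := J) h.le
          linarith
        · linarith
    positivity
end

section
/- Let X ⊆ E be nonempty convex with ‖a − b‖ ≤ R for all a, b ∈ X. For t = 1, …, T, let f_t : E → ℝ be differentiable and L-smooth on X, and let x_t, x_t* ∈ X. Then for any ξ > 0 and any integer τ with 0 ≤ τ ≤ T: Σ_{t=1}^{T} (f_t(x_t) − f_t(x_t*)) ≤ (1/(2ξ)) Σ_{t=1}^{T} ‖∇f_t(x_t*)‖² + ((L + ξ)/2) (τ·R² + Σ_{t=τ+1}^{T} ‖x_t − x_t*‖²). -/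
open scoped RealInnerProductSpace

/-- Smoothness-based bounding step of the dynamic regret (eq. (17) in the
paper): for any `ξ > 0`,
`Σ_{t=1}^{T} (f_t(x_t) − f_t(x_t*)) ≤ (1/(2ξ)) Σ_{t=1}^{T} ‖∇f_t(x_t*)‖²
  + ((L + ξ)/2)(τR² + Σ_{t=τ+1}^{T} ‖x_t − x_t*‖²)`. -/
theorem stmt_10
    {E : Type*} [NormedAddCommGroup E] [InnerProductSpace ℝ E] [FiniteDimensional ℝ E]
    (X : Set E) (hXne : X.Nonempty) (hXcp : IsCompact X) (hXconv : Convex ℝ X)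
    (R : ℝ) (hR : ∀ a ∈ X, ∀ b ∈ X, ‖a - b‖ ≤ R)
    (T : ℕ) (f : ℕ → E → ℝ) (L : ℝ) (hL : 0 < L)
    (hdiff : ∀ t, 1 ≤ t → t ≤ T → Differentiable ℝ (f t))
    (hsm : ∀ t, 1 ≤ t → t ≤ T → ∀ a ∈ X, ∀ b ∈ X,
      f t b ≤ f t a + ⟪gradient (f t) a, b - a⟫ + L / 2 * ‖b - a‖ ^ 2)
    (x xstar : ℕ → E) (hx : ∀ t, 1 ≤ t → t ≤ T → x t ∈ X)
    (hxs : ∀ t, 1 ≤ t → t ≤ T → xstar t ∈ X)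
    (ξ : ℝ) (hξ : 0 < ξ) (τ : ℕ) (hτT : τ ≤ T) :
    ∑ t ∈ Finset.Icc 1 T, (f t (x t) - f t (xstar t))
      ≤ 1 / (2 * ξ) * ∑ t ∈ Finset.Icc 1 T, ‖gradient (f t) (xstar t)‖ ^ 2
        + (L + ξ) / 2
          * ((τ : ℝ) * R ^ 2 + ∑ t ∈ Finset.Icc (τ + 1) T, ‖x t - xstar t‖ ^ 2) := by
  have key : ∀ t ∈ Finset.Icc 1 T,
      f t (x t) - f t (xstar t)
        ≤ 1 / (2 * ξ) * ‖gradient (f t) (xstar t)‖ ^ 2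
          + (L + ξ) / 2 * ‖x t - xstar t‖ ^ 2 := by
    intro t ht
    rw [Finset.mem_Icc] at ht
    have h1 := hsm t ht.1 ht.2 (xstar t) (hxs t ht.1 ht.2) (x t) (hx t ht.1 ht.2)
    have h2 : ⟪gradient (f t) (xstar t), x t - xstar t⟫
        ≤ ‖gradient (f t) (xstar t)‖ * ‖x t - xstar t‖ := real_inner_le_norm _ _
    have h3 : ‖gradient (f t) (xstar t)‖ * ‖x t - xstar t‖
        ≤ 1 / (2 * ξ) * ‖gradient (f t) (xstar t)‖ ^ 2 + ξ / 2 * ‖x t - xstar t‖ ^ 2 := by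
      rw [← sub_nonneg]
      have heq : 1 / (2 * ξ) * ‖gradient (f t) (xstar t)‖ ^ 2 + ξ / 2 * ‖x t - xstar t‖ ^ 2
          - ‖gradient (f t) (xstar t)‖ * ‖x t - xstar t‖
          = (‖gradient (f t) (xstar t)‖ - ξ * ‖x t - xstar t‖) ^ 2 / (2 * ξ) := by
        field_simp
        ring
      rw [heq]
      positivity
    nlinarith [h1, h2, h3]
  calc ∑ t ∈ Finset.Icc 1 T, (f t (x t) - f t (xstar t))
      ≤ ∑ t ∈ Finset.Icc 1 T, (1 / (2 * ξ) * ‖gradient (f t) (xstar t)‖ ^ 2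
          + (L + ξ) / 2 * ‖x t - xstar t‖ ^ 2) := Finset.sum_le_sum key
    _ = 1 / (2 * ξ) * ∑ t ∈ Finset.Icc 1 T, ‖gradient (f t) (xstar t)‖ ^ 2
          + (L + ξ) / 2 * ∑ t ∈ Finset.Icc 1 T, ‖x t - xstar t‖ ^ 2 := by
        rw [Finset.sum_add_distrib, Finset.mul_sum, Finset.mul_sum]
    _ ≤ _ := by
        gcongr ?_ + (L + ξ) / 2 * ?_
        · linarith [hL, hξ]
        · have hsplit : Finset.Icc 1 T = Finset.Ioc 0 τ ∪ Finset.Ioc τ T := by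
            rw [Finset.Ioc_union_Ioc_eq_Ioc (Nat.zero_le τ) hτT]
            rfl
          have hdisj : Disjoint (Finset.Ioc 0 τ) (Finset.Ioc τ T) := by
            simp [Finset.disjoint_left, Finset.mem_Ioc]
            omega
          rw [hsplit, Finset.sum_union hdisj]
          have h4 : ∑ t ∈ Finset.Ioc 0 τ, ‖x t - xstar t‖ ^ 2 ≤ (τ : ℝ) * R ^ 2 := by
            calc ∑ t ∈ Finset.Ioc 0 τ, ‖x t - xstar t‖ ^ 2
                ≤ ∑ t ∈ Finset.Ioc 0 τ, R ^ 2 := by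
                  apply Finset.sum_le_sum
                  intro t ht
                  rw [Finset.mem_Ioc] at ht
                  have := hR (x t) (hx t ht.1 (ht.2.trans hτT)) (xstar t)
                    (hxs t ht.1 (ht.2.trans hτT))
                  exact pow_le_pow_left₀ (norm_nonneg _) this 2
              _ = (τ : ℝ) * R ^ 2 := by simp
          have h5 : Finset.Icc (τ + 1) T = Finset.Ioc τ T := Finset.Icc_add_one_left_eq_Ioc τ T
          rw [h5]
          linarith
end

section
/- In the HiOCO setting with zero local delay, if additionally 2η^{J_l+J_r} < 1, then for any ξ > 0 the dynamic regret satisfies: Σ_{t=1}^{T} (f_t(x_t) − f_t(x_t*)) ≤ (1/(2ξ)) Σ_{t=1}^{T} ‖∇f_t(x_t*)‖² + ((L + ξ)/2)·τ·R² + ((L + ξ)/(2(1 − 2η^{J_l+J_r}))) · ( τ·R² + 2τ²·Π₂* + (2β/(1 − η))·Δ₂ ). -/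
open scoped RealInnerProductSpace


lemma hioco_small_s (c Q : ℝ) (hQ : 0 ≤ Q) (h : ∀ s : ℝ, 0 < s → s ≤ 1 → c ≤ s * Q) : c ≤ 0 := by
  by_contra hc
  push_neg at hc
  have hs : (0:ℝ) < min 1 (c / (2 * Q + 1)) := by
    apply lt_min one_pos; positivity
  have h1 := h _ hs (min_le_left _ _)
  have h3 : min 1 (c / (2 * Q + 1)) * (2 * Q + 1) ≤ c := by
    rw [← le_div_iff₀ (by positivity)]
    exact min_le_right _ _
  nlinarith [mul_nonneg hs.le hQ]

lemma hioco_amgm (d c r : ℝ) (hc : 0 < c) (hr : 0 ≤ r) :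
    d * r ≤ d ^ 2 / c / 2 + c / 2 * r ^ 2 := by
  have key2 : d * r * (2 * c) ≤ d ^ 2 + c ^ 2 * r ^ 2 := by
    nlinarith [sq_nonneg (d - c * r)]
  have key3 : d * r ≤ (d ^ 2 + c ^ 2 * r ^ 2) / (2 * c) :=
    (le_div_iff₀ (by positivity)).2 key2
  have key4 : (d ^ 2 + c ^ 2 * r ^ 2) / (2 * c) = d ^ 2 / c / 2 + c / 2 * r ^ 2 := by
    field_simp
  linarith [key4 ▸ key3]

/-- One-step contraction of an inexact projected gradient step. -/
lemma hioco_step {E : Type*} [NormedAddCommGroup E] [InnerProductSpace ℝ E]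
    {X : Set E} (hXconv : Convex ℝ X)
    {μ L α γ : ℝ} (hμ : 0 < μ) (hμL : μ ≤ L) (hLα : L ≤ α)
    (hγ0 : 0 < γ) (hγ : γ < 2 * μ)
    {f : E → ℝ} {G : E → E}
    (hsc : ∀ a ∈ X, ∀ b ∈ X, f a + ⟪G a, b - a⟫ + μ / 2 * ‖b - a‖ ^ 2 ≤ f b)
    (hsm : ∀ a ∈ X, ∀ b ∈ X, f b ≤ f a + ⟪G a, b - a⟫ + L / 2 * ‖b - a‖ ^ 2)
    {xs : E} (hxs : xs ∈ X) (hmin : ∀ v ∈ X, f xs ≤ f v)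
    {y y' g : E} (hy : y ∈ X) (hy' : y' ∈ X) {δ : ℝ} (hδ0 : 0 ≤ δ)
    (hg : ‖g - G y‖ ≤ δ)
    (hproj : ∀ v ∈ X, ‖(y - (1 / α) • g) - y'‖ ≤ ‖(y - (1 / α) • g) - v‖) :
    ‖y' - xs‖ ^ 2 ≤ (α - μ) / (α + μ - γ) * ‖y - xs‖ ^ 2
      + 1 / (γ * (α + μ - γ)) * δ ^ 2 := by
  have hα : 0 < α := by linarith
  have hK : 0 < α + μ - γ := by linarith
  have hmix : ∀ p ∈ X, ∀ q ∈ X, ∀ s : ℝ, 0 < s → s ≤ 1 → p + s • (q - p) ∈ X := by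
    intro p hp q hq s hs hs1
    have := hXconv hp hq (a := 1 - s) (b := s) (by linarith) hs.le (by ring)
    convert this using 1
    rw [smul_sub, sub_smul, one_smul]
    abel
  -- (a) VI for the gradient at xs
  have hvi : ∀ v ∈ X, 0 ≤ ⟪G xs, v - xs⟫ := by
    intro v hv
    have key : ∀ s : ℝ, 0 < s → s ≤ 1 → -⟪G xs, v - xs⟫ ≤ s * (L / 2 * ‖v - xs‖ ^ 2) := by
      intro s hs hs1
      have hw : xs + s • (v - xs) ∈ X := hmix xs hxs v hv s hs hs1
      have h1 := hmin _ hw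
      have h2 := hsm xs hxs _ hw
      have e1 : xs + s • (v - xs) - xs = s • (v - xs) := by abel
      rw [e1, real_inner_smul_right, norm_smul, Real.norm_eq_abs, abs_of_pos hs] at h2
      have h4 : 0 ≤ s * (⟪G xs, v - xs⟫ + s * (L / 2 * ‖v - xs‖ ^ 2)) := by nlinarith
      have h5 : (0:ℝ) ≤ s * (⟪G xs, v - xs⟫ + s * (L / 2 * ‖v - xs‖ ^ 2)) / s :=
        div_nonneg h4 hs.le
      rw [mul_div_cancel_left₀ _ (ne_of_gt hs)] at h5
      nlinarith
    have := hioco_small_s _ _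
      (mul_nonneg (by linarith : (0:ℝ) ≤ L / 2) (sq_nonneg _)) key
    linarith
  -- (e) projection VI
  set u := y - (1 / α) • g with hu
  have hpvi : ⟪u - y', xs - y'⟫ ≤ 0 := by
    have key : ∀ s : ℝ, 0 < s → s ≤ 1 → 2 * ⟪u - y', xs - y'⟫ ≤ s * ‖xs - y'‖ ^ 2 := by
      intro s hs hs1
      have hw : y' + s • (xs - y') ∈ X := hmix y' hy' xs hxs s hs hs1
      have h1 := hproj _ hw
      have e1 : u - (y' + s • (xs - y')) = (u - y') - s • (xs - y') := by abel
      rw [e1] at h1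
      have h2 : ‖u - y'‖ ^ 2 ≤ ‖(u - y') - s • (xs - y')‖ ^ 2 := by
        nlinarith [norm_nonneg (u - y'), norm_nonneg ((u - y') - s • (xs - y'))]
      have hexp2 : ‖(u - y') - s • (xs - y')‖ ^ 2
          = ‖u - y'‖ ^ 2 - 2 * (s * ⟪u - y', xs - y'⟫) + s ^ 2 * ‖xs - y'‖ ^ 2 := by
        rw [norm_sub_sq_real, real_inner_smul_right, norm_smul, Real.norm_eq_abs,
          abs_of_pos hs]
        ring
      rw [hexp2] at h2
      have h3 : s * (2 * ⟪u - y', xs - y'⟫) ≤ s * (s * ‖xs - y'‖ ^ 2) := by nlinarith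
      exact le_of_mul_le_mul_left h3 hs
    have := hioco_small_s _ _ (sq_nonneg _) key
    linarith
  -- names
  set A := ‖y' - xs‖ ^ 2 with hA
  set B := ‖y - xs‖ ^ 2 with hB
  set C := ‖y - y'‖ ^ 2 with hC
  have hA0 : 0 ≤ A := hA ▸ sq_nonneg _
  have hB0 : 0 ≤ B := hB ▸ sq_nonneg _
  have hC0 : 0 ≤ C := hC ▸ sq_nonneg _
  have hexp : ⟪u - y', xs - y'⟫ = ⟪u - xs, xs - y'⟫ + A := by
    have e : u - y' = (u - xs) + (xs - y') := by abel
    rw [e, inner_add_left, hA, real_inner_self_eq_norm_sq, norm_sub_rev]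
  have h1 : A ≤ ⟪u - xs, y' - xs⟫ := by
    have h := hpvi
    rw [hexp] at h
    have e : ⟪u - xs, y' - xs⟫ = - ⟪u - xs, xs - y'⟫ := by
      rw [show y' - xs = -(xs - y') by abel, inner_neg_right]
    linarith
  have h4 : ⟪G y, y' - xs⟫ + ⟪g - G y, y' - xs⟫ = ⟪g, y' - xs⟫ := by
    rw [← inner_add_left]
    congr 1
    abel
  have h1' : α * A ≤ α * ⟪y - xs, y' - xs⟫ - ⟪G y, y' - xs⟫ - ⟪g - G y, y' - xs⟫ := by
    have e : u - xs = (y - xs) - (1 / α) • g := by rw [hu]; abel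
    have h2 : ⟪u - xs, y' - xs⟫ = ⟪y - xs, y' - xs⟫ - (1 / α) * ⟪g, y' - xs⟫ := by
      rw [e, inner_sub_left, real_inner_smul_left]
    have h3 : α * A ≤ α * ⟪u - xs, y' - xs⟫ := mul_le_mul_of_nonneg_left h1 hα.le
    rw [h2, ← h4] at h3
    have e2 : α * (⟪y - xs, y' - xs⟫ - 1 / α * (⟪G y, y' - xs⟫ + ⟪g - G y, y' - xs⟫))
        = α * ⟪y - xs, y' - xs⟫ - (⟪G y, y' - xs⟫ + ⟪g - G y, y' - xs⟫) := by
      rw [mul_sub, ← mul_assoc, mul_one_div, div_self (ne_of_gt hα), one_mul]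
    rw [e2] at h3
    linarith
  -- parallelogram
  have h2 : 2 * ⟪y - xs, y' - xs⟫ = B + A - C := by
    have hpar := norm_sub_sq_real (y - xs) (y' - xs)
    have e : (y - xs) - (y' - xs) = y - y' := by abel
    rw [e] at hpar
    rw [hA, hB, hC]; linarith
  have h2' : α * ⟪y - xs, y' - xs⟫ = α / 2 * (B + A - C) := by
    linear_combination (α / 2) * h2
  -- gradient bounds
  have h3 : ⟪G y, y' - xs⟫ = ⟪G y, y' - y⟫ + ⟪G y, y - xs⟫ := by
    rw [← inner_add_right]
    congr 1
    abel
  have h4' : f y - f xs + μ / 2 * B ≤ ⟪G y, y - xs⟫ := by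
    have hh := hsc y hy xs hxs
    have e : ⟪G y, xs - y⟫ = - ⟪G y, y - xs⟫ := by
      rw [show xs - y = -(y - xs) by abel, inner_neg_right]
    rw [e, norm_sub_rev] at hh
    rw [hB]; linarith
  have h5 : f y' - f y - L / 2 * C ≤ ⟪G y, y' - y⟫ := by
    have hh := hsm y hy y' hy'
    rw [norm_sub_rev y' y] at hh
    rw [hC]; linarith
  have h6 : f xs - f y' ≤ - (μ / 2) * A := by
    have hs := hsc xs hxs y' hy'
    have hv := hvi y' hy'
    rw [← hA] at hs
    linarith
  -- error term
  have h7 : - ⟪g - G y, y' - xs⟫ ≤ δ ^ 2 / γ / 2 + γ / 2 * A := by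
    have hcs : - ⟪g - G y, y' - xs⟫ ≤ ‖g - G y‖ * ‖y' - xs‖ := by
      have habs := abs_real_inner_le_norm (g - G y) (y' - xs)
      have := neg_abs_le ⟪g - G y, y' - xs⟫
      linarith
    have hb : ‖g - G y‖ * ‖y' - xs‖ ≤ δ * ‖y' - xs‖ :=
      mul_le_mul_of_nonneg_right hg (norm_nonneg _)
    have key3 : δ * ‖y' - xs‖ ≤ δ ^ 2 / γ / 2 + γ / 2 * ‖y' - xs‖ ^ 2 :=
      hioco_amgm δ γ _ hγ0 (norm_nonneg _)
    rw [← hA] at key3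
    linarith
  have hLC : L * C ≤ α * C := mul_le_mul_of_nonneg_right hLα hC0
  have main : α * A + μ * A - γ * A ≤ (α - μ) * B + δ ^ 2 / γ := by linarith
  have etgt : (α - μ) / (α + μ - γ) * B + 1 / (γ * (α + μ - γ)) * δ ^ 2
      = ((α - μ) * B + δ ^ 2 / γ) / (α + μ - γ) := by
    rw [div_mul_eq_mul_div, one_div_mul_eq_div, ← div_div, ← add_div]
  rw [etgt, le_div_iff₀ hK]
  linarith [main]

lemma hioco_shift (F : ℕ → ℝ) (a b c : ℕ) :
    ∑ t ∈ Finset.Icc (a + c) (b + c), F (t - c) = ∑ t ∈ Finset.Icc a b, F t := by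
  rw [← Finset.map_add_right_Icc a b c, Finset.sum_map]
  simp [addRightEmbedding]

lemma hioco_geom (η c : ℝ) (hη : 0 ≤ η) (a : ℕ → ℝ) :
    ∀ J : ℕ, (∀ j < J, a (j + 1) ≤ η * a j + c) →
      a J ≤ η ^ J * a 0 + (∑ i ∈ Finset.range J, η ^ i) * c := by
  intro J
  induction J with
  | zero => intro _; simp
  | succ n ih =>
    intro h
    have h1 := ih (fun j hj => h j (Nat.lt_succ_of_lt hj))
    have h2 := h n (Nat.lt_succ_self n)
    have h3 : η * a n ≤ η * (η ^ n * a 0 + (∑ i ∈ Finset.range n, η ^ i) * c) :=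
      mul_le_mul_of_nonneg_left h1 hη
    have h4 : ∑ i ∈ Finset.range (n + 1), η ^ i = η * ∑ i ∈ Finset.range n, η ^ i + 1 :=
      geom_sum_succ
    rw [h4, pow_succ]
    nlinarith

lemma hioco_tele {E : Type*} [NormedAddCommGroup E] (u : ℕ → E) :
    ∀ m t : ℕ, m ≤ t →
      u t - u (t - m) = ∑ k ∈ Finset.Icc 1 m, (u (t - k + 1) - u (t - k)) := by
  intro m
  induction m with
  | zero => intro t _; simp
  | succ n ih =>
    intro t ht
    rw [Finset.sum_Icc_succ_top (Nat.le_add_left 1 n), ← ih t (by omega)]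
    have e2 : u (t - (n + 1) + 1) = u (t - n) := by
      have e1 : t - (n + 1) + 1 = t - n := by omega
      rw [e1]
    rw [e2]
    abel

set_option maxHeartbeats 1000000

/-- Theorem 1(ii) of the paper: squared-variation dynamic regret bound for
HiOCO with zero local delay. With `η = (α − μ)/(α + μ − γ)` and
`β = 1/(γ(α + μ − γ))`, if `2η^{J_l+J_r} < 1` then for any `ξ > 0`,
`Σ_{t=1}^{T} (f_t(x_t) − f_t(x_t*)) ≤ (1/(2ξ)) Σ_t ‖∇f_t(x_t*)‖²
  + ((L+ξ)/2)τR² + ((L+ξ)/(2(1 − 2η^{J_l+J_r})))(τR² + 2τ²Π₂* + (2β/(1−η))Δ₂)`. -/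
theorem stmt_13
    {E : Type*} [NormedAddCommGroup E] [InnerProductSpace ℝ E] [FiniteDimensional ℝ E]
    (X : Set E) (hXne : X.Nonempty) (hXcp : IsCompact X) (hXconv : Convex ℝ X)
    (R : ℝ) (hR : ∀ a ∈ X, ∀ b ∈ X, ‖a - b‖ ≤ R)
    (T τ Jr Jl : ℕ) (hT : 1 ≤ T) (hτ1 : 1 ≤ τ) (hτT : τ < T) (hJ : 1 ≤ Jr + Jl)
    (μ L α γ : ℝ) (hμ : 0 < μ) (hμL : μ ≤ L) (hLα : L ≤ α)
    (hγ0 : 0 < γ) (hγ : γ < 2 * μ)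
    (f : ℕ → E → ℝ) (hdiff : ∀ t, 1 ≤ t → t ≤ T → Differentiable ℝ (f t))
    (hsc : ∀ t, 1 ≤ t → t ≤ T → ∀ a ∈ X, ∀ b ∈ X,
      f t a + ⟪gradient (f t) a, b - a⟫ + μ / 2 * ‖b - a‖ ^ 2 ≤ f t b)
    (hsm : ∀ t, 1 ≤ t → t ≤ T → ∀ a ∈ X, ∀ b ∈ X,
      f t b ≤ f t a + ⟪gradient (f t) a, b - a⟫ + L / 2 * ‖b - a‖ ^ 2)
    (D : ℝ) (hD : ∀ t, 1 ≤ t → t ≤ T → ∀ x ∈ X, ‖gradient (f t) x‖ ≤ D)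
    (xstar : ℕ → E) (hxsX : ∀ t, 1 ≤ t → t ≤ T → xstar t ∈ X)
    (hxsmin : ∀ t, 1 ≤ t → t ≤ T → ∀ x ∈ X, f t (xstar t) ≤ f t x)
    (δ : ℕ → ℝ) (hδ : ∀ t, 1 ≤ t → t ≤ T → 0 ≤ δ t)
    (x : ℕ → E) (hxX : ∀ t, 1 ≤ t → t ≤ T → x t ∈ X)
    (hiter : ∀ t, τ < t → t ≤ T → ∃ y z : ℕ → E,
      y 0 = x (t - τ) ∧
      (∀ j, 1 ≤ j → j ≤ Jr → ∃ g : E,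
        ‖g - gradient (f (t - τ)) (y (j - 1))‖ ≤ δ (t - τ) ∧ y j ∈ X ∧
        ∀ v ∈ X, ‖(y (j - 1) - (1 / α) • g) - y j‖ ≤ ‖(y (j - 1) - (1 / α) • g) - v‖) ∧
      z 0 = y Jr ∧
      (∀ j, 1 ≤ j → j ≤ Jl → ∃ g : E,
        ‖g - gradient (f t) (z (j - 1))‖ ≤ δ t ∧ z j ∈ X ∧
        ∀ v ∈ X, ‖(z (j - 1) - (1 / α) • g) - z j‖ ≤ ‖(z (j - 1) - (1 / α) • g) - v‖) ∧
      x t = z Jl)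
    (hη : 2 * ((α - μ) / (α + μ - γ)) ^ (Jl + Jr) < 1)
    (ξ : ℝ) (hξ : 0 < ξ) :
    ∑ t ∈ Finset.Icc 1 T, (f t (x t) - f t (xstar t))
      ≤ 1 / (2 * ξ) * ∑ t ∈ Finset.Icc 1 T, ‖gradient (f t) (xstar t)‖ ^ 2
        + (L + ξ) / 2 * (τ : ℝ) * R ^ 2
        + (L + ξ) / (2 * (1 - 2 * ((α - μ) / (α + μ - γ)) ^ (Jl + Jr)))
          * ((τ : ℝ) * R ^ 2
            + 2 * (τ : ℝ) ^ 2 * ∑ t ∈ Finset.Icc 2 T, ‖xstar t - xstar (t - 1)‖ ^ 2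
            + 2 * (1 / (γ * (α + μ - γ))) / (1 - (α - μ) / (α + μ - γ))
              * ∑ t ∈ Finset.Icc 1 T, (δ t) ^ 2) := by
  set η := (α - μ) / (α + μ - γ) with hηdef
  set β := 1 / (γ * (α + μ - γ)) with hβdef
  have hK : 0 < α + μ - γ := by linarith
  have hα : 0 < α := by linarith
  have hη0 : 0 ≤ η := div_nonneg (by linarith) hK.le
  have hη1 : η < 1 := by rw [hηdef, div_lt_one hK]; linarith
  have hβpos : 0 < β := by rw [hβdef]; positivity
  have hR0 : 0 ≤ R := by
    obtain ⟨a, ha⟩ := hXne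
    have := hR a ha a ha
    simpa using this
  have hηJ : 2 * η ^ (Jl + Jr) < 1 := hη
  have hηJ0 : 0 ≤ η ^ (Jl + Jr) := pow_nonneg hη0 _
  set SJr := ∑ i ∈ Finset.range Jr, η ^ i with hSJr
  set SJl := ∑ i ∈ Finset.range Jl, η ^ i with hSJl
  have hSJr0 : 0 ≤ SJr := Finset.sum_nonneg fun i _ => pow_nonneg hη0 _
  have hSJl0 : 0 ≤ SJl := Finset.sum_nonneg fun i _ => pow_nonneg hη0 _
  have hgeomr : SJr * (1 - η) = 1 - η ^ Jr := by
    have := geom_sum_mul η Jr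
    rw [hSJr]
    linarith [this]
  have hgeoml : SJl * (1 - η) = 1 - η ^ Jl := by
    have := geom_sum_mul η Jl
    rw [hSJl]
    linarith [this]
  -- per-round contraction
  have key : ∀ t ∈ Finset.Icc (τ + 1) T,
      ‖x t - xstar t‖ ^ 2 ≤ 2 * η ^ (Jl + Jr) * ‖x (t - τ) - xstar (t - τ)‖ ^ 2
        + 2 * ‖xstar t - xstar (t - τ)‖ ^ 2
        + 2 * η ^ Jl * SJr * β * (δ (t - τ)) ^ 2 + SJl * β * (δ t) ^ 2 := by
    intro t ht
    rw [Finset.mem_Icc] at ht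
    obtain ⟨ht1, ht2⟩ := ht
    have ht0 : τ < t := by omega
    have htτ1 : 1 ≤ t - τ := by omega
    have htτT : t - τ ≤ T := by omega
    have ht1' : 1 ≤ t := by omega
    obtain ⟨y, z, hy0, hys, hz0, hzs, hxt⟩ := hiter t ht0 ht2
    have hymem : ∀ j, j ≤ Jr → y j ∈ X := by
      intro j hj
      cases j with
      | zero => rw [hy0]; exact hxX _ htτ1 htτT
      | succ n =>
        obtain ⟨g, _, hg2, _⟩ := hys (n + 1) (by omega) hj
        exact hg2
    have hzmem : ∀ j, j ≤ Jl → z j ∈ X := by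
      intro j hj
      cases j with
      | zero => rw [hz0]; exact hymem Jr le_rfl
      | succ n =>
        obtain ⟨g, _, hg2, _⟩ := hzs (n + 1) (by omega) hj
        exact hg2
    have hyrec : ∀ j < Jr, ‖y (j + 1) - xstar (t - τ)‖ ^ 2
        ≤ η * ‖y j - xstar (t - τ)‖ ^ 2 + β * (δ (t - τ)) ^ 2 := by
      intro j hj
      obtain ⟨g, hg1, _, hg3⟩ := hys (j + 1) (by omega) (by omega)
      simp only [Nat.add_sub_cancel] at hg1 hg3
      have step := hioco_step hXconv hμ hμL hLα hγ0 hγ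
        (hsc (t - τ) htτ1 htτT) (hsm (t - τ) htτ1 htτT)
        (hxsX (t - τ) htτ1 htτT) (hxsmin (t - τ) htτ1 htτT)
        (hymem j hj.le) (hymem (j + 1) hj) (hδ (t - τ) htτ1 htτT) hg1 hg3
      rw [← hηdef, ← hβdef] at step
      linarith [step]
    have hzrec : ∀ j < Jl, ‖z (j + 1) - xstar t‖ ^ 2
        ≤ η * ‖z j - xstar t‖ ^ 2 + β * (δ t) ^ 2 := by
      intro j hj
      obtain ⟨g, hg1, _, hg3⟩ := hzs (j + 1) (by omega) (by omega)
      simp only [Nat.add_sub_cancel] at hg1 hg3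
      have step := hioco_step hXconv hμ hμL hLα hγ0 hγ
        (hsc t ht1' ht2) (hsm t ht1' ht2)
        (hxsX t ht1' ht2) (hxsmin t ht1' ht2)
        (hzmem j hj.le) (hzmem (j + 1) hj) (hδ t ht1' ht2) hg1 hg3
      rw [← hηdef, ← hβdef] at step
      linarith [step]
    have hyb := hioco_geom η (β * (δ (t - τ)) ^ 2) hη0
      (fun j => ‖y j - xstar (t - τ)‖ ^ 2) Jr hyrec
    have hzb := hioco_geom η (β * (δ t) ^ 2) hη0
      (fun j => ‖z j - xstar t‖ ^ 2) Jl hzrec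
    simp only [hy0] at hyb
    -- cross term
    have hcross : ‖z 0 - xstar t‖ ^ 2 ≤ 2 * ‖y Jr - xstar (t - τ)‖ ^ 2
        + 2 * ‖xstar t - xstar (t - τ)‖ ^ 2 := by
      rw [hz0]
      have tri : ‖y Jr - xstar t‖ ≤ ‖y Jr - xstar (t - τ)‖ + ‖xstar t - xstar (t - τ)‖ := by
        have e : y Jr - xstar t = (y Jr - xstar (t - τ)) - (xstar t - xstar (t - τ)) := by
          abel
        rw [e]
        exact norm_sub_le _ _
      have tri2 : ‖y Jr - xstar t‖ ^ 2
          ≤ (‖y Jr - xstar (t - τ)‖ + ‖xstar t - xstar (t - τ)‖) ^ 2 :=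
        pow_le_pow_left₀ (norm_nonneg _) tri 2
      nlinarith [tri2, sq_nonneg (‖y Jr - xstar (t - τ)‖ - ‖xstar t - xstar (t - τ)‖)]
    -- combine
    have hJl0 : 0 ≤ η ^ Jl := pow_nonneg hη0 _
    have hJl1 : η ^ Jl ≤ 1 := pow_le_one₀ hη0 hη1.le
    have epow : η ^ Jl * η ^ Jr = η ^ (Jl + Jr) := (pow_add η Jl Jr).symm
    have m1 : η ^ Jl * ‖z 0 - xstar t‖ ^ 2
        ≤ η ^ Jl * (2 * ‖y Jr - xstar (t - τ)‖ ^ 2 + 2 * ‖xstar t - xstar (t - τ)‖ ^ 2) :=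
      mul_le_mul_of_nonneg_left hcross hJl0
    have m2 : η ^ Jl * ‖y Jr - xstar (t - τ)‖ ^ 2
        ≤ η ^ Jl * (η ^ Jr * ‖x (t - τ) - xstar (t - τ)‖ ^ 2 + SJr * (β * (δ (t - τ)) ^ 2)) :=
      mul_le_mul_of_nonneg_left hyb hJl0
    have m3 : η ^ Jl * ‖xstar t - xstar (t - τ)‖ ^ 2 ≤ ‖xstar t - xstar (t - τ)‖ ^ 2 :=
      mul_le_of_le_one_left (sq_nonneg _) hJl1
    have m2' : η ^ Jl * (η ^ Jr * ‖x (t - τ) - xstar (t - τ)‖ ^ 2 + SJr * (β * (δ (t - τ)) ^ 2))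
        = η ^ (Jl + Jr) * ‖x (t - τ) - xstar (t - τ)‖ ^ 2
          + η ^ Jl * SJr * β * (δ (t - τ)) ^ 2 := by
      rw [← epow]; ring
    have hzb' : ‖z Jl - xstar t‖ ^ 2
        ≤ η ^ Jl * ‖z 0 - xstar t‖ ^ 2 + SJl * (β * (δ t) ^ 2) := hzb
    have e1 : η ^ Jl * (2 * ‖y Jr - xstar (t - τ)‖ ^ 2 + 2 * ‖xstar t - xstar (t - τ)‖ ^ 2)
        = 2 * (η ^ Jl * ‖y Jr - xstar (t - τ)‖ ^ 2)
          + 2 * (η ^ Jl * ‖xstar t - xstar (t - τ)‖ ^ 2) := by ring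
    have hxteq : ‖x t - xstar t‖ ^ 2 = ‖z Jl - xstar t‖ ^ 2 := by rw [hxt]
    rw [hxteq]
    linarith [hzb', m1, e1, m2, m2', m3]
  -- interval conversion helper
  have eIoc : ∀ a b : ℕ, Finset.Icc (a + 1) b = Finset.Ioc a b := by
    intro a b
    ext i
    simp only [Finset.mem_Icc, Finset.mem_Ioc]
    omega
  set Pi2 := ∑ t ∈ Finset.Icc 2 T, ‖xstar t - xstar (t - 1)‖ ^ 2 with hPi2def
  set Δ2 := ∑ t ∈ Finset.Icc 1 T, (δ t) ^ 2 with hΔ2def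
  have hPi20 : 0 ≤ Pi2 := Finset.sum_nonneg fun i _ => sq_nonneg _
  have hΔ20 : 0 ≤ Δ2 := Finset.sum_nonneg fun i _ => sq_nonneg _
  set S1 := ∑ t ∈ Finset.Icc (τ + 1) T, ‖x t - xstar t‖ ^ 2 with hS1def
  have hS10 : 0 ≤ S1 := Finset.sum_nonneg fun i _ => sq_nonneg _
  -- splitting [1,T] = [1,τ] ∪ [τ+1,T]
  have hsplit : ∑ t ∈ Finset.Icc 1 T, ‖x t - xstar t‖ ^ 2
      = (∑ t ∈ Finset.Icc 1 τ, ‖x t - xstar t‖ ^ 2) + S1 := by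
    rw [hS1def, show (1:ℕ) = 0 + 1 from rfl, eIoc, eIoc, eIoc]
    exact (Finset.sum_Ioc_consecutive _ (by omega) (by omega)).symm
  have hfirst : ∑ t ∈ Finset.Icc 1 τ, ‖x t - xstar t‖ ^ 2 ≤ (τ : ℝ) * R ^ 2 := by
    have hb : ∀ t ∈ Finset.Icc 1 τ, ‖x t - xstar t‖ ^ 2 ≤ R ^ 2 := by
      intro t ht
      rw [Finset.mem_Icc] at ht
      have h1 : 1 ≤ t := ht.1
      have h2 : t ≤ T := by omega
      exact pow_le_pow_left₀ (norm_nonneg _) (hR _ (hxX t h1 h2) _ (hxsX t h1 h2)) 2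
    calc ∑ t ∈ Finset.Icc 1 τ, ‖x t - xstar t‖ ^ 2 ≤ ∑ _t ∈ Finset.Icc 1 τ, R ^ 2 :=
          Finset.sum_le_sum hb
      _ = (τ : ℝ) * R ^ 2 := by
          rw [Finset.sum_const, Nat.card_Icc]
          simp [nsmul_eq_mul]
  -- bound on the shifted sum
  have hA1 : ∑ t ∈ Finset.Icc (τ + 1) T, ‖x (t - τ) - xstar (t - τ)‖ ^ 2
      ≤ (τ : ℝ) * R ^ 2 + S1 := by
    have e : Finset.Icc (τ + 1) T = Finset.Icc (1 + τ) ((T - τ) + τ) := by congr 1 <;> omega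
    have hshift1 : ∑ t ∈ Finset.Icc (τ + 1) T, ‖x (t - τ) - xstar (t - τ)‖ ^ 2
        = ∑ s ∈ Finset.Icc 1 (T - τ), ‖x s - xstar s‖ ^ 2 := by
      rw [e]
      exact hioco_shift (fun s => ‖x s - xstar s‖ ^ 2) 1 (T - τ) τ
    rw [hshift1]
    calc ∑ s ∈ Finset.Icc 1 (T - τ), ‖x s - xstar s‖ ^ 2
        ≤ ∑ s ∈ Finset.Icc 1 T, ‖x s - xstar s‖ ^ 2 :=
          Finset.sum_le_sum_of_subset_of_nonneg
            (Finset.Icc_subset_Icc le_rfl (by omega)) (fun i _ _ => sq_nonneg _)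
      _ = (∑ t ∈ Finset.Icc 1 τ, ‖x t - xstar t‖ ^ 2) + S1 := hsplit
      _ ≤ (τ : ℝ) * R ^ 2 + S1 := by linarith [hfirst]
  -- bound on the path-length sum
  have hD1 : ∑ t ∈ Finset.Icc (τ + 1) T, ‖xstar t - xstar (t - τ)‖ ^ 2
      ≤ (τ : ℝ) ^ 2 * Pi2 := by
    have hper : ∀ t ∈ Finset.Icc (τ + 1) T, ‖xstar t - xstar (t - τ)‖ ^ 2
        ≤ (τ : ℝ) * ∑ k ∈ Finset.Icc 1 τ, ‖xstar (t - k + 1) - xstar (t - k)‖ ^ 2 := by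
      intro t ht
      rw [Finset.mem_Icc] at ht
      have htele := hioco_tele xstar τ t (by omega)
      have n1 : ‖xstar t - xstar (t - τ)‖
          ≤ ∑ k ∈ Finset.Icc 1 τ, ‖xstar (t - k + 1) - xstar (t - k)‖ := by
        rw [htele]
        exact norm_sum_le _ _
      have n2 : (∑ k ∈ Finset.Icc 1 τ, ‖xstar (t - k + 1) - xstar (t - k)‖) ^ 2
          ≤ (τ : ℝ) * ∑ k ∈ Finset.Icc 1 τ, ‖xstar (t - k + 1) - xstar (t - k)‖ ^ 2 := by
        have hcs := Finset.sum_mul_sq_le_sq_mul_sq (Finset.Icc 1 τ) (fun _ => (1:ℝ))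
          (fun k => ‖xstar (t - k + 1) - xstar (t - k)‖)
        simpa [Nat.card_Icc] using hcs
      calc ‖xstar t - xstar (t - τ)‖ ^ 2
          ≤ (∑ k ∈ Finset.Icc 1 τ, ‖xstar (t - k + 1) - xstar (t - k)‖) ^ 2 :=
            pow_le_pow_left₀ (norm_nonneg _) n1 2
        _ ≤ _ := n2
    have hkslice : ∀ k ∈ Finset.Icc 1 τ,
        ∑ t ∈ Finset.Icc (τ + 1) T, ‖xstar (t - k + 1) - xstar (t - k)‖ ^ 2 ≤ Pi2 := by
      intro k hk
      rw [Finset.mem_Icc] at hk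
      have e : Finset.Icc (τ + 1) T = Finset.Icc ((τ + 1 - k) + k) ((T - k) + k) := by
        congr 1 <;> omega
      have hsh : ∑ t ∈ Finset.Icc (τ + 1) T, ‖xstar (t - k + 1) - xstar (t - k)‖ ^ 2
          = ∑ s ∈ Finset.Icc (τ + 1 - k) (T - k), ‖xstar (s + 1) - xstar s‖ ^ 2 := by
        rw [e]
        exact hioco_shift (fun s => ‖xstar (s + 1) - xstar s‖ ^ 2) (τ + 1 - k) (T - k) k
      have hPi : Pi2 = ∑ s ∈ Finset.Icc 1 (T - 1), ‖xstar (s + 1) - xstar s‖ ^ 2 := by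
        rw [hPi2def]
        have e2 : Finset.Icc 2 T = Finset.Icc (1 + 1) ((T - 1) + 1) := by congr 1 <;> omega
        have e3 : ∀ u ∈ Finset.Icc 2 T,
            ‖xstar u - xstar (u - 1)‖ ^ 2 = ‖xstar ((u - 1) + 1) - xstar (u - 1)‖ ^ 2 := by
          intro u hu
          rw [Finset.mem_Icc] at hu
          have e4 : u - 1 + 1 = u := by omega
          rw [e4]
        rw [Finset.sum_congr rfl e3, e2]
        exact hioco_shift (fun s => ‖xstar (s + 1) - xstar s‖ ^ 2) 1 (T - 1) 1
      rw [hsh, hPi]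
      exact Finset.sum_le_sum_of_subset_of_nonneg
        (Finset.Icc_subset_Icc (by omega) (by omega)) (fun i _ _ => sq_nonneg _)
    calc ∑ t ∈ Finset.Icc (τ + 1) T, ‖xstar t - xstar (t - τ)‖ ^ 2
        ≤ ∑ t ∈ Finset.Icc (τ + 1) T,
            (τ : ℝ) * ∑ k ∈ Finset.Icc 1 τ, ‖xstar (t - k + 1) - xstar (t - k)‖ ^ 2 :=
          Finset.sum_le_sum hper
      _ = (τ : ℝ) * ∑ k ∈ Finset.Icc 1 τ,
            ∑ t ∈ Finset.Icc (τ + 1) T, ‖xstar (t - k + 1) - xstar (t - k)‖ ^ 2 := by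
          rw [← Finset.mul_sum, Finset.sum_comm]
      _ ≤ (τ : ℝ) * ∑ _k ∈ Finset.Icc 1 τ, Pi2 := by
          have := Finset.sum_le_sum hkslice
          have hτ0 : (0:ℝ) ≤ (τ : ℝ) := Nat.cast_nonneg _
          exact mul_le_mul_of_nonneg_left this hτ0
      _ = (τ : ℝ) ^ 2 * Pi2 := by
          rw [Finset.sum_const, Nat.card_Icc]
          simp [nsmul_eq_mul]
          ring
  -- bounds on error sums
  have hd1 : ∑ t ∈ Finset.Icc (τ + 1) T, (δ (t - τ)) ^ 2 ≤ Δ2 := by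
    have e : Finset.Icc (τ + 1) T = Finset.Icc (1 + τ) ((T - τ) + τ) := by congr 1 <;> omega
    have hsh : ∑ t ∈ Finset.Icc (τ + 1) T, (δ (t - τ)) ^ 2
        = ∑ s ∈ Finset.Icc 1 (T - τ), (δ s) ^ 2 := by
      rw [e]
      exact hioco_shift (fun s => (δ s) ^ 2) 1 (T - τ) τ
    rw [hsh, hΔ2def]
    exact Finset.sum_le_sum_of_subset_of_nonneg
      (Finset.Icc_subset_Icc le_rfl (by omega)) (fun i _ _ => sq_nonneg _)
  have hd2 : ∑ t ∈ Finset.Icc (τ + 1) T, (δ t) ^ 2 ≤ Δ2 := by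
    rw [hΔ2def]
    exact Finset.sum_le_sum_of_subset_of_nonneg
      (Finset.Icc_subset_Icc (by omega) le_rfl) (fun i _ _ => sq_nonneg _)
  -- sum the key inequality
  have hsum : S1 ≤ 2 * η ^ (Jl + Jr) * ((τ : ℝ) * R ^ 2 + S1) + 2 * ((τ : ℝ) ^ 2 * Pi2)
      + 2 * η ^ Jl * SJr * β * Δ2 + SJl * β * Δ2 := by
    have h0 := Finset.sum_le_sum key
    rw [Finset.sum_add_distrib, Finset.sum_add_distrib, Finset.sum_add_distrib,
      ← Finset.mul_sum, ← Finset.mul_sum, ← Finset.mul_sum, ← Finset.mul_sum] at h0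
    have hJl0 : 0 ≤ η ^ Jl := pow_nonneg hη0 _
    have m1 : 2 * η ^ (Jl + Jr) * (∑ t ∈ Finset.Icc (τ + 1) T, ‖x (t - τ) - xstar (t - τ)‖ ^ 2)
        ≤ 2 * η ^ (Jl + Jr) * ((τ : ℝ) * R ^ 2 + S1) :=
      mul_le_mul_of_nonneg_left hA1 (mul_nonneg (by norm_num) hηJ0)
    have m2 : 2 * (∑ t ∈ Finset.Icc (τ + 1) T, ‖xstar t - xstar (t - τ)‖ ^ 2)
        ≤ 2 * ((τ : ℝ) ^ 2 * Pi2) := by linarith [hD1]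
    have m3 : 2 * η ^ Jl * SJr * β * (∑ t ∈ Finset.Icc (τ + 1) T, (δ (t - τ)) ^ 2)
        ≤ 2 * η ^ Jl * SJr * β * Δ2 :=
      mul_le_mul_of_nonneg_left hd1
        (mul_nonneg (mul_nonneg (mul_nonneg (by norm_num) hJl0) hSJr0) hβpos.le)
    have m4 : SJl * β * (∑ t ∈ Finset.Icc (τ + 1) T, (δ t) ^ 2) ≤ SJl * β * Δ2 :=
      mul_le_mul_of_nonneg_left hd2 (mul_nonneg hSJl0 hβpos.le)
    refine le_trans h0 ?_
    linarith [m1, m2, m3, m4]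
  -- coefficient bound
  have hcoef : 2 * η ^ Jl * SJr * β + SJl * β ≤ 2 * β / (1 - η) := by
    rw [le_div_iff₀ (by linarith : (0:ℝ) < 1 - η)]
    have hJl1 : η ^ Jl ≤ 1 := pow_le_one₀ hη0 hη1.le
    have hJlJr : 0 ≤ η ^ Jl * η ^ Jr := mul_nonneg (pow_nonneg hη0 _) (pow_nonneg hη0 _)
    have e : (2 * η ^ Jl * SJr * β + SJl * β) * (1 - η)
        = 2 * η ^ Jl * β * (SJr * (1 - η)) + β * (SJl * (1 - η)) := by ring
    rw [e, hgeomr, hgeoml]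
    have hq : 2 * η ^ Jl * (1 - η ^ Jr) + (1 - η ^ Jl) ≤ 2 := by
      linarith [hJl1, hJlJr]
    have hm := mul_le_mul_of_nonneg_left hq hβpos.le
    linarith [hm]
  have hcoefΔ : 2 * η ^ Jl * SJr * β * Δ2 + SJl * β * Δ2 ≤ 2 * β / (1 - η) * Δ2 := by
    have hmm := mul_le_mul_of_nonneg_right hcoef hΔ20
    linarith [hmm]
  -- solve for S1
  set M := (τ : ℝ) * R ^ 2 + 2 * (τ : ℝ) ^ 2 * Pi2 + 2 * β / (1 - η) * Δ2 with hMdef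
  clear_value M S1 Pi2 Δ2 SJr SJl η β
  have h2ηJ : (0:ℝ) < 1 - 2 * η ^ (Jl + Jr) := by linarith
  have hS1M : S1 ≤ M / (1 - 2 * η ^ (Jl + Jr)) := by
    rw [le_div_iff₀ h2ηJ]
    have hmul : 2 * η ^ (Jl + Jr) * ((τ : ℝ) * R ^ 2) ≤ 1 * ((τ : ℝ) * R ^ 2) :=
      mul_le_mul_of_nonneg_right hηJ.le (mul_nonneg (Nat.cast_nonneg τ) (sq_nonneg R))
    rw [hMdef]
    linarith [hsum, hcoefΔ, hmul]
  -- per-round regret bound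
  have reg : ∀ t ∈ Finset.Icc 1 T, f t (x t) - f t (xstar t)
      ≤ 1 / (2 * ξ) * ‖gradient (f t) (xstar t)‖ ^ 2
        + (L + ξ) / 2 * ‖x t - xstar t‖ ^ 2 := by
    intro t ht
    rw [Finset.mem_Icc] at ht
    have hs := hsm t ht.1 ht.2 (xstar t) (hxsX t ht.1 ht.2) (x t) (hxX t ht.1 ht.2)
    have hip : ⟪gradient (f t) (xstar t), x t - xstar t⟫
        ≤ ‖gradient (f t) (xstar t)‖ * ‖x t - xstar t‖ := real_inner_le_norm _ _
    have ham : ‖gradient (f t) (xstar t)‖ * ‖x t - xstar t‖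
        ≤ ‖gradient (f t) (xstar t)‖ ^ 2 / ξ / 2 + ξ / 2 * ‖x t - xstar t‖ ^ 2 :=
      hioco_amgm _ _ _ hξ (norm_nonneg _)
    have e : 1 / (2 * ξ) * ‖gradient (f t) (xstar t)‖ ^ 2
        = ‖gradient (f t) (xstar t)‖ ^ 2 / ξ / 2 := by
      rw [div_div, one_div, inv_mul_eq_div, mul_comm (2:ℝ) ξ]
    rw [e]
    linarith [hs, hip, ham]
  -- final assembly
  have hfin := Finset.sum_le_sum reg
  rw [Finset.sum_add_distrib, ← Finset.mul_sum, ← Finset.mul_sum] at hfin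
  have hN : ∑ t ∈ Finset.Icc 1 T, ‖x t - xstar t‖ ^ 2
      ≤ (τ : ℝ) * R ^ 2 + M / (1 - 2 * η ^ (Jl + Jr)) := by
    rw [hsplit]
    linarith [hfirst, hS1M]
  have hLξ : (0:ℝ) ≤ (L + ξ) / 2 := by linarith
  have hNmul := mul_le_mul_of_nonneg_left hN hLξ
  have efin : (L + ξ) / (2 * (1 - 2 * η ^ (Jl + Jr))) * M
      = (L + ξ) / 2 * (M / (1 - 2 * η ^ (Jl + Jr))) := by
    have hne : (1 - 2 * η ^ (Jl + Jr)) ≠ 0 := ne_of_gt h2ηJ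
    field_simp
  rw [efin]
  linarith [hfin, hNmul]
end

section
/- In the HiOCO setting with non-zero local delay, the dynamic regret satisfies: Σ_{t=1}^{T} (f_t(x_t) − f_t(x_t*)) ≤ τ·D·R + (D/(1 − η^{(J_l+J_r)/2})) · ( τ·R + τ·Π* + (√β/(1 − √η))·Δ ), where τ = τ_l + τ_r is the total delay. -/
open scoped RealInnerProductSpace
open Finset

private lemma aux_nonpos {c K : ℝ} (h : ∀ t : ℝ, 0 < t → t ≤ 1 → c ≤ t * K) : c ≤ 0 := by
  by_contra hc
  push_neg at hc
  have hK : c ≤ K := by simpa using h 1 one_pos le_rfl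
  have hKpos : 0 < K := lt_of_lt_of_le hc hK
  have ht1 : (0:ℝ) < c / (2 * K) := by positivity
  have := h (min 1 (c / (2 * K))) (lt_min one_pos ht1) (min_le_left _ _)
  have h2 : min 1 (c / (2 * K)) * K ≤ (c / (2 * K)) * K :=
    mul_le_mul_of_nonneg_right (min_le_right _ _) hKpos.le
  have h3 : (c / (2 * K)) * K = c / 2 := by field_simp
  linarith

private lemma proj_pythag {E : Type*} [NormedAddCommGroup E] [InnerProductSpace ℝ E]
    {X : Set E} (hXconv : Convex ℝ X) {p q : E} (hq : q ∈ X)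
    (hmin : ∀ v ∈ X, ‖p - q‖ ≤ ‖p - v‖) {w : E} (hw : w ∈ X) :
    ‖q - w‖ ^ 2 ≤ ‖p - w‖ ^ 2 - ‖p - q‖ ^ 2 := by
  have hobtuse : ⟪p - q, w - q⟫ ≤ 0 := by
    apply aux_nonpos (K := ‖w - q‖ ^ 2 / 2)
    intro t ht0 ht1
    have hv : q + t • (w - q) ∈ X := by
      have := hXconv hq hw (by linarith : (0:ℝ) ≤ 1 - t) ht0.le (by ring)
      have he : (1 - t) • q + t • w = q + t • (w - q) := by module
      rwa [he] at this
    have h1 : ‖p - q‖ ≤ ‖p - (q + t • (w - q))‖ := hmin _ hv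
    have h2 : ‖p - (q + t • (w - q))‖ ^ 2
        = ‖p - q‖ ^ 2 - 2 * (t * ⟪p - q, w - q⟫) + t ^ 2 * ‖w - q‖ ^ 2 := by
      have he : p - (q + t • (w - q)) = (p - q) - t • (w - q) := by abel
      rw [he, norm_sub_sq_real, real_inner_smul_right, norm_smul, Real.norm_eq_abs,
        abs_of_nonneg ht0.le, mul_pow]
    have h3 : ‖p - q‖ ^ 2 ≤ ‖p - (q + t • (w - q))‖ ^ 2 := by
      have := norm_nonneg (p - q)
      nlinarith
    rw [h2] at h3
    have ht2 : t ^ 2 ≤ t * 1 := by nlinarith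
    nlinarith
  have he : ‖p - w‖ ^ 2 = ‖p - q‖ ^ 2 - 2 * ⟪p - q, w - q⟫ + ‖w - q‖ ^ 2 := by
    have he2 : p - w = (p - q) - (w - q) := by abel
    rw [he2, norm_sub_sq_real]
  have hrev : ‖q - w‖ = ‖w - q‖ := norm_sub_rev _ _
  nlinarith [norm_nonneg (w - q)]

private lemma opt_cond {E : Type*} [NormedAddCommGroup E] [InnerProductSpace ℝ E]
    [CompleteSpace E] {X : Set E} (hXconv : Convex ℝ X) {f : E → ℝ} {L : ℝ}
    (hsm : ∀ a ∈ X, ∀ b ∈ X, f b ≤ f a + ⟪gradient f a, b - a⟫ + L / 2 * ‖b - a‖ ^ 2)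
    {w : E} (hw : w ∈ X) (hmin : ∀ v ∈ X, f w ≤ f v) {v : E} (hv : v ∈ X) :
    0 ≤ ⟪gradient f w, v - w⟫ := by
  have h : -⟪gradient f w, v - w⟫ ≤ 0 := by
    apply aux_nonpos (K := |L| / 2 * ‖v - w‖ ^ 2)
    intro t ht0 ht1
    have hb : w + t • (v - w) ∈ X := by
      have := hXconv hw hv (by linarith : (0:ℝ) ≤ 1 - t) ht0.le (by ring)
      have he : (1 - t) • w + t • v = w + t • (v - w) := by module
      rwa [he] at this
    have h1 := hsm w hw _ hb
    have h2 := hmin _ hb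
    have he : w + t • (v - w) - w = t • (v - w) := by abel
    rw [he, real_inner_smul_right, norm_smul, Real.norm_eq_abs, abs_of_nonneg ht0.le,
      mul_pow] at h1
    have hL : L / 2 ≤ |L| / 2 := by have := le_abs_self L; linarith
    have ht2 : t ^ 2 ≤ t * 1 := by nlinarith
    have hn : (0:ℝ) ≤ ‖v - w‖ ^ 2 := by positivity
    have hmul := mul_le_mul_of_nonneg_right hL (by positivity : (0:ℝ) ≤ t ^ 2 * ‖v - w‖ ^ 2)
    have hmul2 := mul_le_mul_of_nonneg_left ht2 (by positivity : (0:ℝ) ≤ |L| / 2 * ‖v - w‖ ^ 2)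
    have hstep : t * (-⟪gradient f w, v - w⟫) ≤ t * (t * (|L| / 2 * ‖v - w‖ ^ 2)) := by
      nlinarith
    have := (mul_le_mul_iff_right₀ ht0).mp hstep
    linarith
  linarith

set_option maxHeartbeats 1000000 in
private theorem step_contract {E : Type*} [NormedAddCommGroup E]
    [InnerProductSpace ℝ E] [CompleteSpace E]
    {X : Set E} (hXconv : Convex ℝ X)
    {μ L α γ : ℝ} (hμ : 0 < μ) (hμL : μ ≤ L) (hLα : L ≤ α) (hγ0 : 0 < γ) (hγ : γ < 2 * μ)
    {f : E → ℝ}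
    (hsc : ∀ a ∈ X, ∀ b ∈ X, f a + ⟪gradient f a, b - a⟫ + μ / 2 * ‖b - a‖ ^ 2 ≤ f b)
    (hsm : ∀ a ∈ X, ∀ b ∈ X, f b ≤ f a + ⟪gradient f a, b - a⟫ + L / 2 * ‖b - a‖ ^ 2)
    {w : E} (hw : w ∈ X) (hmin : ∀ v ∈ X, f w ≤ f v)
    {y y' g : E} (hy : y ∈ X) (hy' : y' ∈ X) {δ : ℝ} (hδ : 0 ≤ δ)
    (hg : ‖g - gradient f y‖ ≤ δ)
    (hproj : ∀ v ∈ X, ‖(y - (1 / α) • g) - y'‖ ≤ ‖(y - (1 / α) • g) - v‖) :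
    ‖y' - w‖ ≤ Real.sqrt ((α - μ) / (α + μ - γ)) * ‖y - w‖
      + Real.sqrt (1 / (γ * (α + μ - γ))) * δ := by
  have hα : 0 < α := lt_of_lt_of_le hμ (hμL.trans hLα)
  have hd : 0 < α + μ - γ := by linarith
  obtain ⟨p, hp⟩ : ∃ p, p = y - (1 / α) • g := ⟨_, rfl⟩
  have hproj' : ∀ v ∈ X, ‖p - y'‖ ≤ ‖p - v‖ := by rw [hp]; exact hproj
  -- Pythagoras from projection
  have h1 : ‖y' - w‖ ^ 2 ≤ ‖p - w‖ ^ 2 - ‖p - y'‖ ^ 2 := proj_pythag hXconv hy' hproj' hw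
  -- expand
  have h2 : ‖p - w‖ ^ 2 - ‖p - y'‖ ^ 2
      = ‖y - w‖ ^ 2 - ‖y - y'‖ ^ 2 - 2 / α * ⟪g, y' - w⟫ := by
    have e1 : p - w = (y - w) - (1 / α) • g := by rw [hp]; abel
    have e2 : p - y' = (y - y') - (1 / α) • g := by rw [hp]; abel
    have n1 : ‖p - w‖ ^ 2
        = ‖y - w‖ ^ 2 - 2 * (1 / α * ⟪y - w, g⟫) + ‖(1 / α) • g‖ ^ 2 := by
      rw [e1, norm_sub_sq_real, real_inner_smul_right]
    have n2 : ‖p - y'‖ ^ 2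
        = ‖y - y'‖ ^ 2 - 2 * (1 / α * ⟪y - y', g⟫) + ‖(1 / α) • g‖ ^ 2 := by
      rw [e2, norm_sub_sq_real, real_inner_smul_right]
    have e3 : ⟪y - w, g⟫ - ⟪y - y', g⟫ = ⟪y' - w, g⟫ := by
      rw [← inner_sub_left]; congr 1; abel
    have e4 : ⟪y' - w, g⟫ = ⟪g, y' - w⟫ := real_inner_comm _ _
    rw [n1, n2]
    linear_combination (-2 / α) * e3 + (-2 / α) * e4
  -- inner product decomposition and lower bounds
  have hdec : ⟪g, y' - w⟫ = ⟪gradient f y, y' - y⟫ + ⟪gradient f y, y - w⟫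
      + ⟪g - gradient f y, y' - w⟫ := by
    have a1 : ⟪gradient f y, y' - y⟫ + ⟪gradient f y, y - w⟫
        = ⟪gradient f y, y' - w⟫ := by
      rw [← inner_add_right]
      congr 1
      abel
    have a2 : ⟪g - gradient f y, y' - w⟫ = ⟪g, y' - w⟫ - ⟪gradient f y, y' - w⟫ :=
      inner_sub_left _ _ _
    linarith
  have h3 : f y - f w + μ / 2 * ‖y - w‖ ^ 2 ≤ ⟪gradient f y, y - w⟫ := by
    have := hsc y hy w hw
    have e : ⟪gradient f y, w - y⟫ = - ⟪gradient f y, y - w⟫ := by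
      rw [← inner_neg_right]; congr 1; abel
    rw [e] at this
    have hn : ‖w - y‖ = ‖y - w‖ := norm_sub_rev _ _
    rw [hn] at this
    linarith
  have h4 : f y' - f y - L / 2 * ‖y - y'‖ ^ 2 ≤ ⟪gradient f y, y' - y⟫ := by
    have := hsm y hy y' hy'
    have hn : ‖y' - y‖ = ‖y - y'‖ := norm_sub_rev _ _
    rw [hn] at this
    linarith
  have h5 : f w + μ / 2 * ‖y' - w‖ ^ 2 ≤ f y' := by
    have ho := opt_cond hXconv hsm hw hmin hy'
    have := hsc w hw y' hy'
    linarith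
  have h6 : -(δ * ‖y' - w‖) ≤ ⟪g - gradient f y, y' - w⟫ := by
    have h61 := abs_real_inner_le_norm (g - gradient f y) (y' - w)
    have h62 : ‖g - gradient f y‖ * ‖y' - w‖ ≤ δ * ‖y' - w‖ :=
      mul_le_mul_of_nonneg_right hg (norm_nonneg _)
    have := neg_abs_le ⟪g - gradient f y, y' - w⟫
    linarith
  -- combine into quadratic inequality
  have hA := norm_nonneg (y' - w)
  have hB := norm_nonneg (y - w)
  have hC := norm_nonneg (y - y')
  have hkey : (α + μ - γ) * ‖y' - w‖ ^ 2 ≤ (α - μ) * ‖y - w‖ ^ 2 + δ ^ 2 / γ := by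
    have hinner : f y' - f w + μ / 2 * ‖y - w‖ ^ 2 - L / 2 * ‖y - y'‖ ^ 2
        - δ * ‖y' - w‖ ≤ ⟪g, y' - w⟫ := by
      rw [hdec]; linarith
    have hmul : 2 / α * (f y' - f w + μ / 2 * ‖y - w‖ ^ 2 - L / 2 * ‖y - y'‖ ^ 2
        - δ * ‖y' - w‖) ≤ 2 / α * ⟪g, y' - w⟫ :=
      mul_le_mul_of_nonneg_left hinner (by positivity)
    -- multiply h1 + h2 by α
    have hq : α * ‖y' - w‖ ^ 2 ≤ α * ‖y - w‖ ^ 2 - α * ‖y - y'‖ ^ 2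
        - 2 * (f y' - f w + μ / 2 * ‖y - w‖ ^ 2 - L / 2 * ‖y - y'‖ ^ 2 - δ * ‖y' - w‖) := by
      have hcomb : ‖y' - w‖ ^ 2 ≤ ‖y - w‖ ^ 2 - ‖y - y'‖ ^ 2
          - 2 / α * (f y' - f w + μ / 2 * ‖y - w‖ ^ 2 - L / 2 * ‖y - y'‖ ^ 2
            - δ * ‖y' - w‖) := by
        rw [h2] at h1; linarith
      have := mul_le_mul_of_nonneg_left hcomb hα.le
      have he : α * (2 / α * (f y' - f w + μ / 2 * ‖y - w‖ ^ 2 - L / 2 * ‖y - y'‖ ^ 2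
          - δ * ‖y' - w‖)) = 2 * (f y' - f w + μ / 2 * ‖y - w‖ ^ 2
          - L / 2 * ‖y - y'‖ ^ 2 - δ * ‖y' - w‖) := by
        field_simp
      linarith [this, he]
    have hfy : μ / 2 * ‖y' - w‖ ^ 2 ≤ f y' - f w := by linarith
    have hamgm : 2 * (δ * ‖y' - w‖) - γ * ‖y' - w‖ ^ 2 ≤ δ ^ 2 / γ := by
      rw [le_div_iff₀ hγ0]
      nlinarith [sq_nonneg (γ * ‖y' - w‖ - δ)]
    linarith [hq, hfy, hamgm, mul_nonneg (sub_nonneg.mpr hLα) (sq_nonneg ‖y - y'‖)]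
  -- conclude via square roots
  have hη0 : 0 ≤ (α - μ) / (α + μ - γ) := div_nonneg (by linarith) hd.le
  have hβ0 : 0 ≤ 1 / (γ * (α + μ - γ)) := by positivity
  obtain ⟨q, hqdef⟩ : ∃ q, Real.sqrt ((α - μ) / (α + μ - γ)) = q := ⟨_, rfl⟩
  obtain ⟨c, hcdef⟩ : ∃ c, Real.sqrt (1 / (γ * (α + μ - γ))) = c := ⟨_, rfl⟩
  rw [hqdef, hcdef]
  have hq2 : q ^ 2 = (α - μ) / (α + μ - γ) := by rw [← hqdef]; exact Real.sq_sqrt hη0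
  have hc2 : c ^ 2 = 1 / (γ * (α + μ - γ)) := by rw [← hcdef]; exact Real.sq_sqrt hβ0
  have hqn : 0 ≤ q := by rw [← hqdef]; exact Real.sqrt_nonneg _
  have hcn : 0 ≤ c := by rw [← hcdef]; exact Real.sqrt_nonneg _
  have hdiv : ‖y' - w‖ ^ 2 ≤ ((α - μ) * ‖y - w‖ ^ 2 + δ ^ 2 / γ) / (α + μ - γ) := by
    rw [le_div_iff₀ hd]
    linarith [hkey]
  have heq : ((α - μ) * ‖y - w‖ ^ 2 + δ ^ 2 / γ) / (α + μ - γ)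
      = q ^ 2 * ‖y - w‖ ^ 2 + c ^ 2 * δ ^ 2 := by
    rw [hq2, hc2]
    field_simp
  have hfinal : ‖y' - w‖ ^ 2 ≤ (q * ‖y - w‖ + c * δ) ^ 2 := by
    rw [heq] at hdiv
    have hcross : 0 ≤ 2 * (q * ‖y - w‖) * (c * δ) :=
      mul_nonneg (mul_nonneg (by norm_num) (mul_nonneg hqn hB)) (mul_nonneg hcn hδ)
    have hexp : (q * ‖y - w‖ + c * δ) ^ 2
        = q ^ 2 * ‖y - w‖ ^ 2 + 2 * (q * ‖y - w‖) * (c * δ) + c ^ 2 * δ ^ 2 := by ring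
    linarith [hdiv, hcross, hexp]
  have hS : 0 ≤ q * ‖y - w‖ + c * δ :=
    add_nonneg (mul_nonneg hqn hB) (mul_nonneg hcn hδ)
  calc ‖y' - w‖ = Real.sqrt (‖y' - w‖ ^ 2) := (Real.sqrt_sq hA).symm
    _ ≤ Real.sqrt ((q * ‖y - w‖ + c * δ) ^ 2) := Real.sqrt_le_sqrt hfinal
    _ = q * ‖y - w‖ + c * δ := Real.sqrt_sq hS

private lemma sum_shift {M : Type*} [AddCommMonoid M] (g : ℕ → M) (d l u : ℕ) :
    ∑ t ∈ Icc (l + d) (u + d), g (t - d) = ∑ s ∈ Icc l u, g s := by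
  rw [← Finset.map_add_right_Icc, Finset.sum_map]
  exact Finset.sum_congr rfl fun s _ => by simp [addRightEmbedding]

private lemma tele {E : Type*} [NormedAddCommGroup E] (v : ℕ → E) (m k : ℕ) :
    ‖v (m + k) - v m‖ ≤ ∑ i ∈ range k, ‖v (m + i + 1) - v (m + i)‖ := by
  induction k with
  | zero => simp
  | succ k ih =>
    rw [Finset.sum_range_succ]
    calc ‖v (m + (k + 1)) - v m‖
        ≤ ‖v (m + (k + 1)) - v (m + k)‖ + ‖v (m + k) - v m‖ := by
          have : v (m + (k + 1)) - v m = (v (m + (k + 1)) - v (m + k)) + (v (m + k) - v m) := by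
            abel
          rw [this]; exact norm_add_le _ _
      _ ≤ _ := by
          have he : m + (k + 1) = m + k + 1 := by omega
          rw [he]; linarith

private lemma geom_split (q : ℝ) (m n : ℕ) :
    ∑ i ∈ range (m + n), q ^ i
      = (∑ i ∈ range m, q ^ i) + q ^ m * ∑ i ∈ range n, q ^ i := by
  rw [Finset.sum_range_add, Finset.mul_sum]
  congr 1
  exact Finset.sum_congr rfl fun i _ => by rw [pow_add]

private lemma geom_le' (q : ℝ) (hq0 : 0 ≤ q) (hq1 : q < 1) (n : ℕ) :
    ∑ i ∈ range n, q ^ i ≤ 1 / (1 - q) := by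
  have h := geom_sum_mul q n
  have h1 : 0 < 1 - q := by linarith
  rw [le_div_iff₀ h1]
  nlinarith [pow_nonneg hq0 n]

private theorem phase_contract {E : Type*} [NormedAddCommGroup E] [InnerProductSpace ℝ E]
    [CompleteSpace E]
    {X : Set E} (hXconv : Convex ℝ X)
    {μ L α γ : ℝ} (hμ : 0 < μ) (hμL : μ ≤ L) (hLα : L ≤ α) (hγ0 : 0 < γ) (hγ : γ < 2 * μ)
    {f : E → ℝ}
    (hsc : ∀ a ∈ X, ∀ b ∈ X, f a + ⟪gradient f a, b - a⟫ + μ / 2 * ‖b - a‖ ^ 2 ≤ f b)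
    (hsm : ∀ a ∈ X, ∀ b ∈ X, f b ≤ f a + ⟪gradient f a, b - a⟫ + L / 2 * ‖b - a‖ ^ 2)
    {w : E} (hw : w ∈ X) (hmin : ∀ v ∈ X, f w ≤ f v)
    {δ : ℝ} (hδ : 0 ≤ δ) (J : ℕ) (u : ℕ → E) (hu0 : u 0 ∈ X)
    (hstep : ∀ j, 1 ≤ j → j ≤ J → ∃ g : E,
      ‖g - gradient f (u (j - 1))‖ ≤ δ ∧ u j ∈ X ∧
      ∀ v ∈ X, ‖(u (j - 1) - (1 / α) • g) - u j‖ ≤ ‖(u (j - 1) - (1 / α) • g) - v‖) :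
    u J ∈ X ∧ ‖u J - w‖ ≤ Real.sqrt ((α - μ) / (α + μ - γ)) ^ J * ‖u 0 - w‖
      + Real.sqrt (1 / (γ * (α + μ - γ))) * δ
        * ∑ i ∈ Finset.range J, Real.sqrt ((α - μ) / (α + μ - γ)) ^ i := by
  induction J with
  | zero => simpa using hu0
  | succ J ih =>
    obtain ⟨hJX, hJbd⟩ := ih (fun j h1 h2 => hstep j h1 (h2.trans (Nat.le_succ J)))
    obtain ⟨g, hg, huJX, hproj⟩ := hstep (J + 1) (Nat.le_add_left 1 J) le_rfl
    simp only [Nat.add_sub_cancel] at hg hproj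
    have hstep1 := step_contract hXconv hμ hμL hLα hγ0 hγ hsc hsm hw hmin hJX huJX hδ hg hproj
    refine ⟨huJX, ?_⟩
    have hqn : 0 ≤ Real.sqrt ((α - μ) / (α + μ - γ)) := Real.sqrt_nonneg _
    have hcn : 0 ≤ Real.sqrt (1 / (γ * (α + μ - γ))) := Real.sqrt_nonneg _
    have hmono := mul_le_mul_of_nonneg_left hJbd hqn
    rw [geom_sum_succ]
    calc ‖u (J + 1) - w‖
        ≤ Real.sqrt ((α - μ) / (α + μ - γ)) * ‖u J - w‖
          + Real.sqrt (1 / (γ * (α + μ - γ))) * δ := hstep1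
      _ ≤ _ := by
          rw [pow_succ]
          nlinarith [mul_nonneg hcn hδ]
  done

set_option maxHeartbeats 2000000 in
/-- Theorem 2(i) of the paper: dynamic regret bound for HiOCO with non-zero
local delay `τ_l ≥ 1` and remote delay `τ_r ≥ 1`, total delay `τ = τ_l + τ_r`.
With `η = (α − μ)/(α + μ − γ)` and `β = 1/(γ(α + μ − γ))`,
`Σ_{t=1}^{T} (f_t(x_t) − f_t(x_t*)) ≤ τDR
  + (D/(1 − (√η)^{J_l+J_r})) (τR + τΠ* + (√β/(1 − √η))Δ)`. -/
theorem stmt_14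
    {E : Type*} [NormedAddCommGroup E] [InnerProductSpace ℝ E] [FiniteDimensional ℝ E]
    (X : Set E) (hXne : X.Nonempty) (hXcp : IsCompact X) (hXconv : Convex ℝ X)
    (R : ℝ) (hR : ∀ a ∈ X, ∀ b ∈ X, ‖a - b‖ ≤ R)
    (T τl τr Jr Jl : ℕ) (hT : 1 ≤ T) (hτl : 1 ≤ τl) (hτr : 1 ≤ τr)
    (hτT : τl + τr < T) (hJ : 1 ≤ Jr + Jl)
    (μ L α γ : ℝ) (hμ : 0 < μ) (hμL : μ ≤ L) (hLα : L ≤ α)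
    (hγ0 : 0 < γ) (hγ : γ < 2 * μ)
    (f : ℕ → E → ℝ) (hdiff : ∀ t, 1 ≤ t → t ≤ T → Differentiable ℝ (f t))
    (hsc : ∀ t, 1 ≤ t → t ≤ T → ∀ a ∈ X, ∀ b ∈ X,
      f t a + ⟪gradient (f t) a, b - a⟫ + μ / 2 * ‖b - a‖ ^ 2 ≤ f t b)
    (hsm : ∀ t, 1 ≤ t → t ≤ T → ∀ a ∈ X, ∀ b ∈ X,
      f t b ≤ f t a + ⟪gradient (f t) a, b - a⟫ + L / 2 * ‖b - a‖ ^ 2)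
    (D : ℝ) (hD : ∀ t, 1 ≤ t → t ≤ T → ∀ x ∈ X, ‖gradient (f t) x‖ ≤ D)
    (xstar : ℕ → E) (hxsX : ∀ t, 1 ≤ t → t ≤ T → xstar t ∈ X)
    (hxsmin : ∀ t, 1 ≤ t → t ≤ T → ∀ x ∈ X, f t (xstar t) ≤ f t x)
    (δ : ℕ → ℝ) (hδ : ∀ t, 1 ≤ t → t ≤ T → 0 ≤ δ t)
    (x : ℕ → E) (hxX : ∀ t, 1 ≤ t → t ≤ T → x t ∈ X)
    (hiter : ∀ t, τl + τr < t → t ≤ T → ∃ y z : ℕ → E,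
      y 0 = x (t - (τl + τr)) ∧
      (∀ j, 1 ≤ j → j ≤ Jr → ∃ g : E,
        ‖g - gradient (f (t - (τl + τr))) (y (j - 1))‖ ≤ δ (t - (τl + τr)) ∧ y j ∈ X ∧
        ∀ v ∈ X, ‖(y (j - 1) - (1 / α) • g) - y j‖ ≤ ‖(y (j - 1) - (1 / α) • g) - v‖) ∧
      z 0 = y Jr ∧
      (∀ j, 1 ≤ j → j ≤ Jl → ∃ g : E,
        ‖g - gradient (f (t - τl)) (z (j - 1))‖ ≤ δ (t - τl) ∧ z j ∈ X ∧
        ∀ v ∈ X, ‖(z (j - 1) - (1 / α) • g) - z j‖ ≤ ‖(z (j - 1) - (1 / α) • g) - v‖) ∧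
      x t = z Jl) :
    ∑ t ∈ Finset.Icc 1 T, (f t (x t) - f t (xstar t))
      ≤ ((τl + τr : ℕ) : ℝ) * D * R
        + D / (1 - Real.sqrt ((α - μ) / (α + μ - γ)) ^ (Jl + Jr))
          * (((τl + τr : ℕ) : ℝ) * R
            + ((τl + τr : ℕ) : ℝ) * ∑ t ∈ Finset.Icc 2 T, ‖xstar t - xstar (t - 1)‖
            + Real.sqrt (1 / (γ * (α + μ - γ)))
                / (1 - Real.sqrt ((α - μ) / (α + μ - γ)))
              * ∑ t ∈ Finset.Icc 1 T, δ t) := by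
  have hα : 0 < α := lt_of_lt_of_le hμ (hμL.trans hLα)
  have hd : 0 < α + μ - γ := by linarith
  -- opaque names for sqrt quantities
  obtain ⟨q, hqdef⟩ : ∃ q', Real.sqrt ((α - μ) / (α + μ - γ)) = q' := ⟨_, rfl⟩
  obtain ⟨c, hcdef⟩ : ∃ c', Real.sqrt (1 / (γ * (α + μ - γ))) = c' := ⟨_, rfl⟩
  rw [hqdef, hcdef]
  have hqn : 0 ≤ q := by rw [← hqdef]; exact Real.sqrt_nonneg _
  have hcn : 0 ≤ c := by rw [← hcdef]; exact Real.sqrt_nonneg _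
  have hq2 : q ^ 2 = (α - μ) / (α + μ - γ) := by
    rw [← hqdef]; exact Real.sq_sqrt (div_nonneg (by linarith) hd.le)
  have hq1 : q < 1 := by
    have hη1 : (α - μ) / (α + μ - γ) < 1 := by rw [div_lt_one hd]; linarith
    nlinarith [hq2]
  have hρ1 : q ^ (Jl + Jr) < 1 := pow_lt_one₀ hqn hq1 (by omega)
  have hρ0 : 0 ≤ q ^ (Jl + Jr) := pow_nonneg hqn _
  have hρd : 0 < 1 - q ^ (Jl + Jr) := by linarith
  have hqd : 0 < 1 - q := by linarith
  -- R and D nonneg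
  obtain ⟨x0, hx0⟩ := hXne
  have hR0 : 0 ≤ R := le_trans (norm_nonneg _) (hR x0 hx0 x0 hx0)
  have hD0 : 0 ≤ D := le_trans (norm_nonneg _) (hD 1 le_rfl hT x0 hx0)
  -- abbreviations
  have hPi0 : 0 ≤ ∑ t ∈ Finset.Icc 2 T, ‖xstar t - xstar (t - 1)‖ :=
    Finset.sum_nonneg fun _ _ => norm_nonneg _
  have hDelta0 : 0 ≤ ∑ t ∈ Finset.Icc 1 T, δ t :=
    Finset.sum_nonneg fun t ht => hδ t (Finset.mem_Icc.mp ht).1 (Finset.mem_Icc.mp ht).2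
  -- per-step regret bound
  have hreg : ∀ t ∈ Finset.Icc 1 T, f t (x t) - f t (xstar t) ≤ D * ‖x t - xstar t‖ := by
    intro t ht
    obtain ⟨ht1, ht2⟩ := Finset.mem_Icc.mp ht
    have h1 := hsc t ht1 ht2 (x t) (hxX t ht1 ht2) (xstar t) (hxsX t ht1 ht2)
    have h2 := abs_real_inner_le_norm (gradient (f t) (x t)) (xstar t - x t)
    have h3 : ‖gradient (f t) (x t)‖ * ‖xstar t - x t‖ ≤ D * ‖xstar t - x t‖ :=
      mul_le_mul_of_nonneg_right (hD t ht1 ht2 _ (hxX t ht1 ht2)) (norm_nonneg _)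
    have h4 : ‖xstar t - x t‖ = ‖x t - xstar t‖ := norm_sub_rev _ _
    rw [h4] at h2 h3
    have h5 := neg_abs_le ⟪gradient (f t) (x t), xstar t - x t⟫
    have h6 : 0 ≤ μ * ‖xstar t - x t‖ ^ 2 := mul_nonneg hμ.le (sq_nonneg _)
    linarith
  -- key per-step contraction inequality
  have key : ∀ t ∈ Finset.Icc (τl + τr + 1) T,
      ‖x t - xstar (t - τl)‖
        ≤ q ^ (Jl + Jr) * ‖x (t - (τl + τr)) - xstar (t - (τl + τr))‖
          + q ^ Jl * ‖xstar (t - (τl + τr)) - xstar (t - τl)‖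
          + (c * (q ^ Jl * ∑ i ∈ range Jr, q ^ i)) * δ (t - (τl + τr))
          + (c * ∑ i ∈ range Jl, q ^ i) * δ (t - τl) := by
    intro t ht
    obtain ⟨ht1, ht2⟩ := Finset.mem_Icc.mp ht
    obtain ⟨y, z, hy0, hys, hz0, hzs, hxt⟩ := hiter t (by omega) ht2
    have hb1 : 1 ≤ t - (τl + τr) := by omega
    have hb2 : t - (τl + τr) ≤ T := by omega
    have hb3 : 1 ≤ t - τl := by omega
    have hb4 : t - τl ≤ T := by omega
    have hδ1 : 0 ≤ δ (t - (τl + τr)) := hδ _ hb1 hb2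
    have hδ2 : 0 ≤ δ (t - τl) := hδ _ hb3 hb4
    have hy0X : y 0 ∈ X := by rw [hy0]; exact hxX _ hb1 hb2
    have hph1 := phase_contract hXconv hμ hμL hLα hγ0 hγ
      (hsc _ hb1 hb2) (hsm _ hb1 hb2) (hxsX _ hb1 hb2) (hxsmin _ hb1 hb2)
      hδ1 Jr y hy0X hys
    have hz0X : z 0 ∈ X := by rw [hz0]; exact hph1.1
    have hph2 := phase_contract hXconv hμ hμL hLα hγ0 hγ
      (hsc _ hb3 hb4) (hsm _ hb3 hb4) (hxsX _ hb3 hb4) (hxsmin _ hb3 hb4)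
      hδ2 Jl z hz0X hzs
    rw [hqdef, hcdef] at hph1 hph2
    have htri : ‖z 0 - xstar (t - τl)‖
        ≤ ‖y Jr - xstar (t - (τl + τr))‖ + ‖xstar (t - (τl + τr)) - xstar (t - τl)‖ := by
      rw [hz0]; exact norm_sub_le_norm_sub_add_norm_sub _ _ _
    have h1 := hph1.2
    have h2 := hph2.2
    rw [hy0] at h1
    rw [hz0] at h2
    rw [hxt]
    have hm1 : q ^ Jl * ‖y Jr - xstar (t - τl)‖
        ≤ q ^ Jl * (‖y Jr - xstar (t - (τl + τr))‖
          + ‖xstar (t - (τl + τr)) - xstar (t - τl)‖) := by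
      apply mul_le_mul_of_nonneg_left _ (pow_nonneg hqn _)
      exact norm_sub_le_norm_sub_add_norm_sub _ _ _
    have hm2 : q ^ Jl * ‖y Jr - xstar (t - (τl + τr))‖
        ≤ q ^ Jl * (q ^ Jr * ‖x (t - (τl + τr)) - xstar (t - (τl + τr))‖
          + c * δ (t - (τl + τr)) * ∑ i ∈ range Jr, q ^ i) :=
      mul_le_mul_of_nonneg_left h1 (pow_nonneg hqn _)
    have hpowB : q ^ (Jl + Jr) * ‖x (t - (τl + τr)) - xstar (t - (τl + τr))‖
        = q ^ Jl * (q ^ Jr * ‖x (t - (τl + τr)) - xstar (t - (τl + τr))‖) := by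
      rw [pow_add]; ring
    linarith
  -- abbreviation facts for sums
  have hG1 : 0 ≤ ∑ i ∈ range Jl, q ^ i := Finset.sum_nonneg fun i _ => pow_nonneg hqn i
  have hG2 : 0 ≤ ∑ i ∈ range Jr, q ^ i := Finset.sum_nonneg fun i _ => pow_nonneg hqn i
  have hgs : ∑ i ∈ range (Jl + Jr), q ^ i
      = (∑ i ∈ range Jl, q ^ i) + q ^ Jl * ∑ i ∈ range Jr, q ^ i := geom_split q Jl Jr
  have hSg : ∑ i ∈ range (Jl + Jr), q ^ i ≤ 1 / (1 - q) := geom_le' q hqn hq1 _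
  -- summed key inequality
  have hsum1 : ∑ t ∈ Finset.Icc (τl + τr + 1) T, ‖x t - xstar (t - τl)‖
      ≤ q ^ (Jl + Jr) * ∑ t ∈ Finset.Icc (τl + τr + 1) T,
          ‖x (t - (τl + τr)) - xstar (t - (τl + τr))‖
        + q ^ Jl * ∑ t ∈ Finset.Icc (τl + τr + 1) T,
            ‖xstar (t - (τl + τr)) - xstar (t - τl)‖
        + (c * (q ^ Jl * ∑ i ∈ range Jr, q ^ i))
            * ∑ t ∈ Finset.Icc (τl + τr + 1) T, δ (t - (τl + τr))
        + (c * ∑ i ∈ range Jl, q ^ i)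
            * ∑ t ∈ Finset.Icc (τl + τr + 1) T, δ (t - τl) := by
    have h := Finset.sum_le_sum key
    rw [Finset.sum_add_distrib, Finset.sum_add_distrib, Finset.sum_add_distrib,
      ← Finset.mul_sum, ← Finset.mul_sum, ← Finset.mul_sum, ← Finset.mul_sum] at h
    exact h
  -- shift bound for the x-distance sum
  have hre : Finset.Icc (τl + τr + 1) T
      = Finset.Icc (1 + (τl + τr)) ((T - (τl + τr)) + (τl + τr)) := by congr 1 <;> omega
  have hWs : ∑ t ∈ Finset.Icc (τl + τr + 1) T,
        ‖x (t - (τl + τr)) - xstar (t - (τl + τr))‖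
      ≤ ((τl + τr : ℕ) : ℝ) * R
        + ∑ t ∈ Finset.Icc (τl + τr + 1) T, ‖x t - xstar (t - τl)‖
        + ∑ t ∈ Finset.Icc (τl + τr + 1) T, ‖xstar (t - τl) - xstar t‖ := by
    have heqs : ∑ t ∈ Finset.Icc (τl + τr + 1) T,
          ‖x (t - (τl + τr)) - xstar (t - (τl + τr))‖
        = ∑ s ∈ Finset.Icc 1 (T - (τl + τr)), ‖x s - xstar s‖ := by
      rw [hre]; exact sum_shift (fun s => ‖x s - xstar s‖) _ _ _
    rw [heqs]
    have hcover : Finset.Icc 1 (T - (τl + τr))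
        ⊆ Finset.Icc 1 (τl + τr) ∪ Finset.Icc (τl + τr + 1) (T - (τl + τr)) := by
      intro s hs
      simp only [Finset.mem_Icc, Finset.mem_union] at *
      omega
    have hdisj : Disjoint (Finset.Icc 1 (τl + τr))
        (Finset.Icc (τl + τr + 1) (T - (τl + τr))) := by
      rw [Finset.disjoint_left]
      intro a ha hb
      simp only [Finset.mem_Icc] at ha hb
      omega
    calc ∑ s ∈ Finset.Icc 1 (T - (τl + τr)), ‖x s - xstar s‖
        ≤ ∑ s ∈ Finset.Icc 1 (τl + τr) ∪ Finset.Icc (τl + τr + 1) (T - (τl + τr)),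
            ‖x s - xstar s‖ :=
          Finset.sum_le_sum_of_subset_of_nonneg hcover fun _ _ _ => norm_nonneg _
      _ = (∑ s ∈ Finset.Icc 1 (τl + τr), ‖x s - xstar s‖)
          + ∑ s ∈ Finset.Icc (τl + τr + 1) (T - (τl + τr)), ‖x s - xstar s‖ :=
          Finset.sum_union hdisj
      _ ≤ ((τl + τr : ℕ) : ℝ) * R
          + (∑ t ∈ Finset.Icc (τl + τr + 1) T, ‖x t - xstar (t - τl)‖
            + ∑ t ∈ Finset.Icc (τl + τr + 1) T, ‖xstar (t - τl) - xstar t‖) := by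
          gcongr ?_ + ?_
          · calc ∑ s ∈ Finset.Icc 1 (τl + τr), ‖x s - xstar s‖
                ≤ ∑ _s ∈ Finset.Icc 1 (τl + τr), R := by
                  apply Finset.sum_le_sum
                  intro s hs
                  obtain ⟨h1, h2⟩ := Finset.mem_Icc.mp hs
                  exact hR _ (hxX s h1 (by omega)) _ (hxsX s h1 (by omega))
              _ = ((τl + τr : ℕ) : ℝ) * R := by
                  rw [Finset.sum_const, Nat.card_Icc]
                  simp [nsmul_eq_mul]
          · calc ∑ s ∈ Finset.Icc (τl + τr + 1) (T - (τl + τr)), ‖x s - xstar s‖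
                ≤ ∑ s ∈ Finset.Icc (τl + τr + 1) (T - (τl + τr)),
                    (‖x s - xstar (s - τl)‖ + ‖xstar (s - τl) - xstar s‖) :=
                  Finset.sum_le_sum fun s _ => norm_sub_le_norm_sub_add_norm_sub _ _ _
              _ ≤ ∑ s ∈ Finset.Icc (τl + τr + 1) T,
                    (‖x s - xstar (s - τl)‖ + ‖xstar (s - τl) - xstar s‖) := by
                  apply Finset.sum_le_sum_of_subset_of_nonneg
                  · intro s hs
                    simp only [Finset.mem_Icc] at *
                    omega
                  · intro s _ _
                    positivity
              _ = _ := Finset.sum_add_distrib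
      _ = _ := by ring
  -- path-length bound for the Q-sum
  have hQ : ∑ t ∈ Finset.Icc (τl + τr + 1) T, ‖xstar (t - τl) - xstar t‖
      ≤ (τl : ℝ) * ∑ t ∈ Finset.Icc 2 T, ‖xstar t - xstar (t - 1)‖ := by
    calc ∑ t ∈ Finset.Icc (τl + τr + 1) T, ‖xstar (t - τl) - xstar t‖
        ≤ ∑ t ∈ Finset.Icc (τl + τr + 1) T,
            ∑ i ∈ range τl, ‖xstar (t - τl + i + 1) - xstar (t - τl + i)‖ := by
          apply Finset.sum_le_sum
          intro t ht
          obtain ⟨h1, h2⟩ := Finset.mem_Icc.mp ht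
          have hm : t - τl + τl = t := by omega
          have htl := tele xstar (t - τl) τl
          rw [hm] at htl
          calc ‖xstar (t - τl) - xstar t‖ = ‖xstar t - xstar (t - τl)‖ := norm_sub_rev _ _
            _ ≤ _ := htl
      _ = ∑ i ∈ range τl, ∑ t ∈ Finset.Icc (τl + τr + 1) T,
            ‖xstar (t - τl + i + 1) - xstar (t - τl + i)‖ := Finset.sum_comm
      _ ≤ ∑ _i ∈ range τl, ∑ t ∈ Finset.Icc 2 T, ‖xstar t - xstar (t - 1)‖ := by
          apply Finset.sum_le_sum
          intro i hi
          have hi' : i < τl := Finset.mem_range.mp hi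
          have he1 : ∑ t ∈ Finset.Icc (τl + τr + 1) T,
                ‖xstar (t - τl + i + 1) - xstar (t - τl + i)‖
              = ∑ t ∈ Finset.Icc (τl + τr + 1) T,
                ‖xstar (t - (τl - 1 - i)) - xstar (t - (τl - 1 - i) - 1)‖ := by
            apply Finset.sum_congr rfl
            intro t ht
            obtain ⟨h1, h2⟩ := Finset.mem_Icc.mp ht
            have e1 : t - τl + i + 1 = t - (τl - 1 - i) := by omega
            have e2 : t - τl + i = t - (τl - 1 - i) - 1 := by omega
            rw [e1, e2]
          rw [he1]
          have hre2 : Finset.Icc (τl + τr + 1) T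
              = Finset.Icc ((τl + τr + 1 - (τl - 1 - i)) + (τl - 1 - i))
                  ((T - (τl - 1 - i)) + (τl - 1 - i)) := by congr 1 <;> omega
          have he2 : ∑ t ∈ Finset.Icc ((τl + τr + 1 - (τl - 1 - i)) + (τl - 1 - i))
                ((T - (τl - 1 - i)) + (τl - 1 - i)),
                ‖xstar (t - (τl - 1 - i)) - xstar (t - (τl - 1 - i) - 1)‖
              = ∑ s ∈ Finset.Icc (τl + τr + 1 - (τl - 1 - i)) (T - (τl - 1 - i)),
                ‖xstar s - xstar (s - 1)‖ :=
            sum_shift (fun s => ‖xstar s - xstar (s - 1)‖) _ _ _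
          rw [hre2, he2]
          apply Finset.sum_le_sum_of_subset_of_nonneg
          · intro s hs
            simp only [Finset.mem_Icc] at *
            omega
          · intro s _ _
            exact norm_nonneg _
      _ = (τl : ℝ) * ∑ t ∈ Finset.Icc 2 T, ‖xstar t - xstar (t - 1)‖ := by
          rw [Finset.sum_const, Finset.card_range, nsmul_eq_mul]
  -- path-length bound for the P1-sum
  have hP1 : ∑ t ∈ Finset.Icc (τl + τr + 1) T, ‖xstar (t - (τl + τr)) - xstar (t - τl)‖
      ≤ (τr : ℝ) * ∑ t ∈ Finset.Icc 2 T, ‖xstar t - xstar (t - 1)‖ := by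
    calc ∑ t ∈ Finset.Icc (τl + τr + 1) T, ‖xstar (t - (τl + τr)) - xstar (t - τl)‖
        ≤ ∑ t ∈ Finset.Icc (τl + τr + 1) T,
            ∑ i ∈ range τr, ‖xstar (t - (τl + τr) + i + 1) - xstar (t - (τl + τr) + i)‖ := by
          apply Finset.sum_le_sum
          intro t ht
          obtain ⟨h1, h2⟩ := Finset.mem_Icc.mp ht
          have hm : t - (τl + τr) + τr = t - τl := by omega
          have htl := tele xstar (t - (τl + τr)) τr
          rw [hm] at htl
          calc ‖xstar (t - (τl + τr)) - xstar (t - τl)‖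
              = ‖xstar (t - τl) - xstar (t - (τl + τr))‖ := norm_sub_rev _ _
            _ ≤ _ := htl
      _ = ∑ i ∈ range τr, ∑ t ∈ Finset.Icc (τl + τr + 1) T,
            ‖xstar (t - (τl + τr) + i + 1) - xstar (t - (τl + τr) + i)‖ := Finset.sum_comm
      _ ≤ ∑ _i ∈ range τr, ∑ t ∈ Finset.Icc 2 T, ‖xstar t - xstar (t - 1)‖ := by
          apply Finset.sum_le_sum
          intro i hi
          have hi' : i < τr := Finset.mem_range.mp hi
          have he1 : ∑ t ∈ Finset.Icc (τl + τr + 1) T,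
                ‖xstar (t - (τl + τr) + i + 1) - xstar (t - (τl + τr) + i)‖
              = ∑ t ∈ Finset.Icc (τl + τr + 1) T,
                ‖xstar (t - (τl + τr - 1 - i)) - xstar (t - (τl + τr - 1 - i) - 1)‖ := by
            apply Finset.sum_congr rfl
            intro t ht
            obtain ⟨h1, h2⟩ := Finset.mem_Icc.mp ht
            have e1 : t - (τl + τr) + i + 1 = t - (τl + τr - 1 - i) := by omega
            have e2 : t - (τl + τr) + i = t - (τl + τr - 1 - i) - 1 := by omega
            rw [e1, e2]
          rw [he1]
          have hre2 : Finset.Icc (τl + τr + 1) T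
              = Finset.Icc ((τl + τr + 1 - (τl + τr - 1 - i)) + (τl + τr - 1 - i))
                  ((T - (τl + τr - 1 - i)) + (τl + τr - 1 - i)) := by congr 1 <;> omega
          have he2 : ∑ t ∈ Finset.Icc ((τl + τr + 1 - (τl + τr - 1 - i)) + (τl + τr - 1 - i))
                ((T - (τl + τr - 1 - i)) + (τl + τr - 1 - i)),
                ‖xstar (t - (τl + τr - 1 - i)) - xstar (t - (τl + τr - 1 - i) - 1)‖
              = ∑ s ∈ Finset.Icc (τl + τr + 1 - (τl + τr - 1 - i)) (T - (τl + τr - 1 - i)),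
                ‖xstar s - xstar (s - 1)‖ :=
            sum_shift (fun s => ‖xstar s - xstar (s - 1)‖) _ _ _
          rw [hre2, he2]
          apply Finset.sum_le_sum_of_subset_of_nonneg
          · intro s hs
            simp only [Finset.mem_Icc] at *
            omega
          · intro s _ _
            exact norm_nonneg _
      _ = (τr : ℝ) * ∑ t ∈ Finset.Icc 2 T, ‖xstar t - xstar (t - 1)‖ := by
          rw [Finset.sum_const, Finset.card_range, nsmul_eq_mul]
  -- error-sum shift bounds
  have hD1 : ∑ t ∈ Finset.Icc (τl + τr + 1) T, δ (t - (τl + τr))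
      ≤ ∑ t ∈ Finset.Icc 1 T, δ t := by
    have heqs : ∑ t ∈ Finset.Icc (τl + τr + 1) T, δ (t - (τl + τr))
        = ∑ s ∈ Finset.Icc 1 (T - (τl + τr)), δ s := by
      rw [hre]; exact sum_shift δ _ _ _
    rw [heqs]
    apply Finset.sum_le_sum_of_subset_of_nonneg
    · intro s hs
      simp only [Finset.mem_Icc] at *
      omega
    · intro s hs _
      obtain ⟨h1, h2⟩ := Finset.mem_Icc.mp hs
      exact hδ s h1 h2
  have hD2 : ∑ t ∈ Finset.Icc (τl + τr + 1) T, δ (t - τl)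
      ≤ ∑ t ∈ Finset.Icc 1 T, δ t := by
    have hre3 : Finset.Icc (τl + τr + 1) T
        = Finset.Icc ((τr + 1) + τl) ((T - τl) + τl) := by congr 1 <;> omega
    have heqs : ∑ t ∈ Finset.Icc (τl + τr + 1) T, δ (t - τl)
        = ∑ s ∈ Finset.Icc (τr + 1) (T - τl), δ s := by
      rw [hre3]; exact sum_shift δ _ _ _
    rw [heqs]
    apply Finset.sum_le_sum_of_subset_of_nonneg
    · intro s hs
      simp only [Finset.mem_Icc] at *
      omega
    · intro s hs _
      obtain ⟨h1, h2⟩ := Finset.mem_Icc.mp hs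
      exact hδ s h1 h2
  -- generalize the big sums to opaque variables
  obtain ⟨SA, hSAdef⟩ : ∃ v, ∑ t ∈ Finset.Icc (τl + τr + 1) T, ‖x t - xstar (t - τl)‖ = v :=
    ⟨_, rfl⟩
  obtain ⟨SQ, hSQdef⟩ : ∃ v, ∑ t ∈ Finset.Icc (τl + τr + 1) T, ‖xstar (t - τl) - xstar t‖ = v :=
    ⟨_, rfl⟩
  obtain ⟨SW, hSWdef⟩ : ∃ v, ∑ t ∈ Finset.Icc (τl + τr + 1) T,
      ‖x (t - (τl + τr)) - xstar (t - (τl + τr))‖ = v := ⟨_, rfl⟩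
  obtain ⟨SP, hSPdef⟩ : ∃ v, ∑ t ∈ Finset.Icc (τl + τr + 1) T,
      ‖xstar (t - (τl + τr)) - xstar (t - τl)‖ = v := ⟨_, rfl⟩
  obtain ⟨SD1, hSD1def⟩ : ∃ v, ∑ t ∈ Finset.Icc (τl + τr + 1) T, δ (t - (τl + τr)) = v :=
    ⟨_, rfl⟩
  obtain ⟨SD2, hSD2def⟩ : ∃ v, ∑ t ∈ Finset.Icc (τl + τr + 1) T, δ (t - τl) = v := ⟨_, rfl⟩
  obtain ⟨PI, hPIdef⟩ : ∃ v, ∑ t ∈ Finset.Icc 2 T, ‖xstar t - xstar (t - 1)‖ = v := ⟨_, rfl⟩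
  obtain ⟨DE, hDEdef⟩ : ∃ v, ∑ t ∈ Finset.Icc 1 T, δ t = v := ⟨_, rfl⟩
  obtain ⟨G1, hG1def⟩ : ∃ v, ∑ i ∈ range Jl, q ^ i = v := ⟨_, rfl⟩
  obtain ⟨G2, hG2def⟩ : ∃ v, ∑ i ∈ range Jr, q ^ i = v := ⟨_, rfl⟩
  obtain ⟨GG, hGGdef⟩ : ∃ v, ∑ i ∈ range (Jl + Jr), q ^ i = v := ⟨_, rfl⟩
  obtain ⟨RR, hRRdef⟩ : ∃ v, ((τl + τr : ℕ) : ℝ) = v := ⟨_, rfl⟩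
  rw [hSAdef, hSWdef, hSPdef, hSD1def, hSD2def, hG1def, hG2def] at hsum1
  rw [hSWdef, hRRdef, hSAdef, hSQdef] at hWs
  rw [hSQdef, hPIdef] at hQ
  rw [hSPdef, hPIdef] at hP1
  rw [hSD1def, hDEdef] at hD1
  rw [hSD2def, hDEdef] at hD2
  rw [hG1def, hG2def, hGGdef] at hgs
  rw [hGGdef] at hSg
  rw [hG1def] at hG1
  rw [hG2def] at hG2
  rw [hPIdef] at hPi0
  rw [hDEdef] at hDelta0
  rw [hPIdef, hDEdef, hRRdef]
  have hS0 : 0 ≤ SA := hSAdef ▸ Finset.sum_nonneg fun _ _ => norm_nonneg _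
  have hQn0 : 0 ≤ SQ := hSQdef ▸ Finset.sum_nonneg fun _ _ => norm_nonneg _
  -- solve for SA + SQ
  have hfinS : SA + SQ ≤ (RR * R + RR * PI + c / (1 - q) * DE) / (1 - q ^ (Jl + Jr)) := by
    rw [le_div_iff₀ hρd]
    have p1 := mul_le_mul_of_nonneg_left hWs hρ0
    have p2 := mul_le_mul_of_nonneg_left hP1 (pow_nonneg hqn Jl)
    have p3 := mul_le_mul_of_nonneg_left hD1
      (mul_nonneg hcn (mul_nonneg (pow_nonneg hqn Jl) hG2))
    have p4 := mul_le_mul_of_nonneg_left hD2 (mul_nonneg hcn hG1)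
    have p5 : c * GG * DE ≤ c / (1 - q) * DE := by
      have h5 := mul_le_mul_of_nonneg_right (mul_le_mul_of_nonneg_left hSg hcn) hDelta0
      have he : c * (1 / (1 - q)) * DE = c / (1 - q) * DE := by ring
      linarith [h5, he]
    have p6 := mul_le_mul_of_nonneg_left hQ hρ0
    have p7 : q ^ (Jl + Jr) * (RR * R) ≤ 1 * (RR * R) := by
      apply mul_le_mul_of_nonneg_right hρ1.le
      rw [← hRRdef]
      positivity
    have p8 : q ^ Jl * ((τr : ℝ) * PI) ≤ 1 * ((τr : ℝ) * PI) := by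
      apply mul_le_mul_of_nonneg_right (pow_le_one₀ hqn hq1.le)
      positivity
    have hCE : (c * (q ^ Jl * G2)) * DE + (c * G1) * DE = c * GG * DE := by
      rw [hgs]; ring
    have hsplitPI : RR * PI = (τl : ℝ) * PI + (τr : ℝ) * PI := by
      rw [← hRRdef]
      push_cast
      ring
    linarith [hsum1, p1, p2, p3, p4, p5, p6, p7, p8, hCE, hsplitPI, hQ, hDelta0, hPi0]
  -- split the regret sum
  have hcov2 : Finset.Icc 1 T = Finset.Icc 1 (τl + τr) ∪ Finset.Icc (τl + τr + 1) T := by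
    ext s
    simp only [Finset.mem_Icc, Finset.mem_union]
    omega
  have hdisj2 : Disjoint (Finset.Icc 1 (τl + τr)) (Finset.Icc (τl + τr + 1) T) := by
    rw [Finset.disjoint_left]
    intro a ha hb
    simp only [Finset.mem_Icc] at ha hb
    omega
  rw [hcov2, Finset.sum_union hdisj2]
  -- bound the early part
  have hbound1 : ∑ t ∈ Finset.Icc 1 (τl + τr), (f t (x t) - f t (xstar t))
      ≤ RR * (D * R) := by
    calc ∑ t ∈ Finset.Icc 1 (τl + τr), (f t (x t) - f t (xstar t))
        ≤ ∑ _t ∈ Finset.Icc 1 (τl + τr), D * R := by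
          apply Finset.sum_le_sum
          intro t ht
          obtain ⟨h1, h2⟩ := Finset.mem_Icc.mp ht
          have h2' : t ≤ T := by omega
          refine le_trans (hreg t (Finset.mem_Icc.mpr ⟨h1, h2'⟩)) ?_
          exact mul_le_mul_of_nonneg_left (hR _ (hxX t h1 h2') _ (hxsX t h1 h2')) hD0
      _ = RR * (D * R) := by
          rw [Finset.sum_const, Nat.card_Icc, ← hRRdef]
          simp [nsmul_eq_mul]
  -- bound the main part
  have hbound2 : ∑ t ∈ Finset.Icc (τl + τr + 1) T, (f t (x t) - f t (xstar t))
      ≤ D * (SA + SQ) := by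
    calc ∑ t ∈ Finset.Icc (τl + τr + 1) T, (f t (x t) - f t (xstar t))
        ≤ ∑ t ∈ Finset.Icc (τl + τr + 1) T,
            D * (‖x t - xstar (t - τl)‖ + ‖xstar (t - τl) - xstar t‖) := by
          apply Finset.sum_le_sum
          intro t ht
          obtain ⟨h1, h2⟩ := Finset.mem_Icc.mp ht
          refine le_trans (hreg t (Finset.mem_Icc.mpr ⟨by omega, h2⟩)) ?_
          exact mul_le_mul_of_nonneg_left (norm_sub_le_norm_sub_add_norm_sub _ _ _) hD0
      _ = D * (SA + SQ) := by
          rw [← Finset.mul_sum, Finset.sum_add_distrib, hSAdef, hSQdef]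
  -- conclude
  have hmulS := mul_le_mul_of_nonneg_left hfinS hD0
  have hring : D * ((RR * R + RR * PI + c / (1 - q) * DE) / (1 - q ^ (Jl + Jr)))
      = D / (1 - q ^ (Jl + Jr)) * (RR * R + RR * PI + c / (1 - q) * DE) := by
    ring
  linarith [hbound1, hbound2, hmulS, hring]
end
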